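/- arXiv:1411.4255 — 7 statements merged into one kernel-verified Lean document; each statement's English description precedes it below -/
import Mathlib

section
/- Let (a_i)_{i≥1} be strictly positive reals with partial sums A_i. If for every ε > 0 there exists N such that a_i ≤ i^{-α+ε} for all i ≥ N (where α > 0), then for every ε > 0 there exists M such that ∑_{i≥n} a_i²/A_i ≤ n^{-α+ε} for all n ≥ M. -/
open Real Filter Finset

/-- Bernoulli-type inequality: for `0 < t ≤ 1` and `δ > 0`, `δ(1-t) ≤ t^(-δ) - 1`. -/
lemma aux_tangent (δ : ℝ) (hδ : 0 < δ) {t : ℝ} (ht : 0 < t) (ht1 : t ≤ 1) :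
    δ * (1 - t) ≤ t ^ (-δ) - 1 := by
  have hlog : Real.log t ≤ t - 1 := Real.log_le_sub_one_of_pos ht
  have h1 : (1 : ℝ) + δ * (1 - t) ≤ Real.exp (δ * (1 - t)) := by
    linarith [Real.add_one_le_exp (δ * (1 - t))]
  have h2 : Real.exp (δ * (1 - t)) ≤ Real.exp (-δ * Real.log t) := by
    apply Real.exp_le_exp.2; nlinarith
  have h3 : Real.exp (-δ * Real.log t) = t ^ (-δ) := by
    rw [Real.rpow_def_of_pos ht]; ring_nf
  nlinarith [h1.trans (h2.trans_eq h3)]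

/-- Telescoping step: for `0 < y ≤ x`, `(x-y)/x^(1+δ) ≤ (y^(-δ) - x^(-δ))/δ`. -/
lemma aux_step (δ : ℝ) (hδ : 0 < δ) {x y : ℝ} (hy : 0 < y) (hxy : y ≤ x) :
    (x - y) / x ^ (1 + δ) ≤ (y ^ (-δ) - x ^ (-δ)) / δ := by
  have hx : 0 < x := hy.trans_le hxy
  rw [div_le_div_iff₀ (by positivity) hδ]
  have ht : 0 < y / x := div_pos hy hx
  have ht1 : y / x ≤ 1 := (div_le_one hx).2 hxy
  have key := aux_tangent δ hδ ht ht1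
  have e1 : (y / x) ^ (-δ) = y ^ (-δ) * x ^ δ := by
    rw [Real.div_rpow hy.le hx.le, Real.rpow_neg hx.le]
    field_simp
  have e2 : x ^ (1 + δ) = x * x ^ δ := by rw [Real.rpow_add hx, Real.rpow_one]
  have e3 : x ^ (-δ) * x ^ δ = 1 := by
    rw [← Real.rpow_add hx]; simp
  have key2 : x * (δ * (1 - y / x)) ≤ x * ((y / x) ^ (-δ) - 1) :=
    mul_le_mul_of_nonneg_left key hx.le
  have e4 : x * (δ * (1 - y / x)) = (x - y) * δ := by field_simp
  have e5 : x * ((y / x) ^ (-δ) - 1) = (y ^ (-δ) - x ^ (-δ)) * x ^ (1 + δ) := by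
    rw [e1, e2]; nlinarith [e3]
  linarith [key2, e4 ▸ e5 ▸ key2]

/-- If `a i ≤ i^(-α + o(1))` for some `α > 0`, then the tail sums satisfy
`∑_{i ≥ n} a i ^ 2 / A i ≤ n^(-α + o(1))`. -/
theorem stmt_2 (a : ℕ → ℝ) (ha : ∀ i, 0 < a i)
    (A : ℕ → ℝ) (hA : ∀ n, A n = ∑ i ∈ Finset.range (n + 1), a i)
    (α : ℝ) (hα : 0 < α)
    (hupper : ∀ ε > (0 : ℝ), ∃ N : ℕ, ∀ i ≥ N, a i ≤ (i : ℝ) ^ (-α + ε)) :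
    ∀ ε > (0 : ℝ), ∃ M : ℕ, ∀ n ≥ M,
      (∑' i : ℕ, (a (i + n)) ^ 2 / A (i + n)) ≤ (n : ℝ) ^ (-α + ε) := by
  intro ε hε
  -- basic facts about A
  have hApos : ∀ k, 0 < A k := by
    intro k
    rw [hA k]
    exact Finset.sum_pos (fun i _ => ha i) (by simp)
  have hAsucc : ∀ k, A (k + 1) = A k + a (k + 1) := by
    intro k
    rw [hA (k + 1), hA k, Finset.sum_range_succ]
  have hAmono : Monotone A := monotone_nat_of_le_succ (fun k => by
    rw [hAsucc k]; linarith [(ha (k + 1))])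
  have hA0 : A 0 = a 0 := by rw [hA 0]; simp
  -- parameters
  set β := min ε α with hβdef
  have hβ : 0 < β := lt_min hε hα
  have hβε : β ≤ ε := min_le_left _ _
  have hβα : β ≤ α := min_le_right _ _
  set δ := β / 4 with hδdef
  have hδ : 0 < δ := by positivity
  obtain ⟨N₁, hN₁⟩ := hupper (β / 4) (by positivity)
  set N : ℕ := max N₁ 1 with hNdef
  have hN1 : 1 ≤ N := le_max_right _ _
  -- eventually a i ≤ 1
  have ha1 : ∀ i ≥ N, a i ≤ 1 := by
    intro i hi
    refine (hN₁ i (le_trans (le_max_left _ _) hi)).trans ?_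
    apply Real.rpow_le_one_of_one_le_of_nonpos
    · exact_mod_cast le_trans hN1 hi
    · linarith
  -- A grows at most linearly: A k ≤ C * (k+1)
  set C : ℝ := A N + 1 with hCdef
  have hCpos : 0 < C := by have := hApos N; linarith
  have hAlin : ∀ k, A k ≤ C * (k + 1) := by
    have step : ∀ j, A (N + j) ≤ A N + j := by
      intro j
      induction j with
      | zero => simp
      | succ j ih =>
        have : A (N + j + 1) = A (N + j) + a (N + j + 1) := hAsucc _
        have h1 : a (N + j + 1) ≤ 1 := ha1 _ (by omega)
        push_cast
        rw [show N + (j + 1) = N + j + 1 from rfl, this]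
        push_cast at ih
        linarith
    intro k
    rcases le_or_gt k N with h | h
    · have : A k ≤ A N := hAmono h
      have hk : (0 : ℝ) ≤ k := Nat.cast_nonneg k
      nlinarith [hApos N]
    · obtain ⟨j, rfl⟩ := Nat.exists_eq_add_of_le h.le
      have := step j
      have hN' : (0 : ℝ) ≤ N := Nat.cast_nonneg N
      have hj' : (0 : ℝ) ≤ j := Nat.cast_nonneg j
      push_cast
      push_cast at this
      nlinarith [hApos N]
  -- pointwise bound on a k * A k ^ δ for k ≥ n ≥ N, n ≥ 1
  have hexp : -α + β / 4 + δ ≤ -α / 2 := by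
    rw [hδdef]; linarith
  have hptwise : ∀ n ≥ N, ∀ k, n ≤ k →
      a k * A k ^ δ ≤ C ^ δ * 2 ^ δ * (n : ℝ) ^ (-α + β / 4 + δ) := by
    intro n hn k hk
    have hk1 : 1 ≤ k := le_trans (le_trans hN1 hn) hk
    have hkR : (1 : ℝ) ≤ (k : ℝ) := by exact_mod_cast hk1
    have hkpos : (0 : ℝ) < k := by linarith
    have h1 : a k ≤ (k : ℝ) ^ (-α + β / 4) :=
      hN₁ k (le_trans (le_max_left _ _) (le_trans hn hk))
    have h2 : A k ^ δ ≤ (C * (k + 1)) ^ δ :=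
      Real.rpow_le_rpow (hApos k).le (hAlin k) hδ.le
    have h3 : (C * ((k : ℝ) + 1)) ^ δ ≤ (C * (2 * k)) ^ δ := by
      apply Real.rpow_le_rpow (by positivity) _ hδ.le
      nlinarith
    have h4 : (C * (2 * (k : ℝ))) ^ δ = C ^ δ * 2 ^ δ * (k : ℝ) ^ δ := by
      rw [Real.mul_rpow hCpos.le (by positivity), Real.mul_rpow (by norm_num) hkpos.le]
      ring
    have h5 : a k * A k ^ δ ≤ (k : ℝ) ^ (-α + β / 4) * (C ^ δ * 2 ^ δ * (k : ℝ) ^ δ) := by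
      exact mul_le_mul h1 (h2.trans (h3.trans_eq h4))
        (Real.rpow_nonneg (hApos k).le δ) (Real.rpow_nonneg (Nat.cast_nonneg k) _)
    have h6 : (k : ℝ) ^ (-α + β / 4) * (k : ℝ) ^ δ = (k : ℝ) ^ (-α + β / 4 + δ) :=
      (Real.rpow_add hkpos _ _).symm
    have h7 : (k : ℝ) ^ (-α + β / 4 + δ) ≤ (n : ℝ) ^ (-α + β / 4 + δ) := by
      apply Real.rpow_le_rpow_of_nonpos
      · exact_mod_cast Nat.pos_of_ne_zero (by omega)
      · exact_mod_cast hk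
      · linarith
    calc a k * A k ^ δ ≤ (k : ℝ) ^ (-α + β / 4) * (C ^ δ * 2 ^ δ * (k : ℝ) ^ δ) := h5
      _ = C ^ δ * 2 ^ δ * ((k : ℝ) ^ (-α + β / 4) * (k : ℝ) ^ δ) := by ring
      _ = C ^ δ * 2 ^ δ * (k : ℝ) ^ (-α + β / 4 + δ) := by rw [h6]
      _ ≤ C ^ δ * 2 ^ δ * (n : ℝ) ^ (-α + β / 4 + δ) := by
          apply mul_le_mul_of_nonneg_left h7; positivity
  -- telescoping sum bound
  have htel : ∀ p m : ℕ, ∑ i ∈ Finset.range m, a (i + (p + 1)) / A (i + (p + 1)) ^ (1 + δ)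
      ≤ (A p ^ (-δ) - A (m + p) ^ (-δ)) / δ := by
    intro p m
    induction m with
    | zero => simp
    | succ m ih =>
      rw [Finset.sum_range_succ]
      have hstep : a (m + (p + 1)) / A (m + (p + 1)) ^ (1 + δ)
          ≤ (A (m + p) ^ (-δ) - A (m + p + 1) ^ (-δ)) / δ := by
        have h1 : A (m + p + 1) = A (m + p) + a (m + p + 1) := hAsucc _
        have h2 := aux_step δ hδ (hApos (m + p)) (x := A (m + p + 1)) (by rw [h1]; linarith [ha (m + p + 1)])
        have h3 : A (m + p + 1) - A (m + p) = a (m + p + 1) := by rw [h1]; ring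
        rw [h3] at h2
        convert h2 using 3 <;> rfl
      have heq2 : (m + 1 + p) = m + p + 1 := by omega
      rw [heq2]
      calc ∑ i ∈ Finset.range m, a (i + (p + 1)) / A (i + (p + 1)) ^ (1 + δ)
            + a (m + (p + 1)) / A (m + (p + 1)) ^ (1 + δ)
          ≤ (A p ^ (-δ) - A (m + p) ^ (-δ)) / δ
            + (A (m + p) ^ (-δ) - A (m + p + 1) ^ (-δ)) / δ := add_le_add ih hstep
        _ = (A p ^ (-δ) - A (m + p + 1) ^ (-δ)) / δ := by ring
  -- assemble: choose M
  have hgrow : Tendsto (fun n : ℕ => (n : ℝ) ^ (ε - β / 2)) atTop atTop :=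
    (tendsto_rpow_atTop (by linarith)).comp tendsto_natCast_atTop_atTop
  set E : ℝ := C ^ δ * 2 ^ δ * ((a 0) ^ (-δ) / δ) with hEdef
  obtain ⟨M₀, hM₀⟩ := Filter.eventually_atTop.1 (hgrow.eventually_ge_atTop E)
  refine ⟨max M₀ N, fun n hn => ?_⟩
  have hnN : N ≤ n := le_trans (le_max_right _ _) hn
  have hn1 : 1 ≤ n := le_trans hN1 hnN
  have hnpos : (0 : ℝ) < n := by exact_mod_cast Nat.pos_of_ne_zero (by omega)
  obtain ⟨p, rfl⟩ : ∃ p, n = p + 1 := ⟨n - 1, by omega⟩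
  set n := p + 1
  -- bound on A p ^ (-δ)
  have hAp : A p ^ (-δ) ≤ (a 0) ^ (-δ) := by
    apply Real.rpow_le_rpow_of_nonpos (ha 0) _ (by linarith)
    rw [← hA0]; exact hAmono (Nat.zero_le p)
  set Bn : ℝ := C ^ δ * 2 ^ δ * (n : ℝ) ^ (-α + β / 4 + δ) with hBdef
  have hBn : 0 ≤ Bn := by positivity
  -- partial sums bound
  have hsum : ∀ m, ∑ i ∈ Finset.range m, a (i + n) ^ 2 / A (i + n)
      ≤ Bn * ((a 0) ^ (-δ) / δ) := by
    intro m
    have h1 : ∀ i, a (i + n) ^ 2 / A (i + n)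
        ≤ Bn * (a (i + n) / A (i + n) ^ (1 + δ)) := by
      intro i
      have hApos' := hApos (i + n)
      have heq : a (i + n) ^ 2 / A (i + n)
          = (a (i + n) * A (i + n) ^ δ) * (a (i + n) / A (i + n) ^ (1 + δ)) := by
        rw [Real.rpow_add hApos', Real.rpow_one]
        have hAδ : (0:ℝ) < A (i + n) ^ δ := Real.rpow_pos_of_pos hApos' δ
        field_simp
      rw [heq]
      exact mul_le_mul_of_nonneg_right (hptwise n hnN (i + n) (by omega))
        (div_nonneg (ha _).le (Real.rpow_nonneg (hApos _).le _))
    calc ∑ i ∈ Finset.range m, a (i + n) ^ 2 / A (i + n)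
        ≤ ∑ i ∈ Finset.range m, Bn * (a (i + n) / A (i + n) ^ (1 + δ)) :=
          Finset.sum_le_sum (fun i _ => h1 i)
      _ = Bn * ∑ i ∈ Finset.range m, a (i + n) / A (i + n) ^ (1 + δ) := by
          rw [Finset.mul_sum]
      _ ≤ Bn * ((A p ^ (-δ) - A (m + p) ^ (-δ)) / δ) :=
          mul_le_mul_of_nonneg_left (htel p m) hBn
      _ ≤ Bn * ((a 0) ^ (-δ) / δ) := by
          apply mul_le_mul_of_nonneg_left _ hBn
          have h8 : 0 < A (m + p) ^ (-δ) := Real.rpow_pos_of_pos (hApos _) _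
          exact (div_le_div_iff_of_pos_right hδ).2 (by linarith [hAp])
  -- tsum bound
  have htsum : (∑' i : ℕ, a (i + n) ^ 2 / A (i + n)) ≤ Bn * ((a 0) ^ (-δ) / δ) :=
    Real.tsum_le_of_sum_range_le
      (fun i => div_nonneg (by positivity) (hApos (i + n)).le) hsum
  have hE : E ≤ (n : ℝ) ^ (ε - β / 2) := hM₀ n (le_trans (le_max_left _ _) hn)
  have hexp2 : (-α + β / 4 + δ) = -α + β / 2 := by rw [hδdef]; ring
  calc (∑' i : ℕ, a (i + n) ^ 2 / A (i + n)) ≤ Bn * ((a 0) ^ (-δ) / δ) := htsum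
    _ = E * (n : ℝ) ^ (-α + β / 2) := by rw [hBdef, hEdef, hexp2]; ring
    _ ≤ (n : ℝ) ^ (ε - β / 2) * (n : ℝ) ^ (-α + β / 2) :=
        mul_le_mul_of_nonneg_right hE (Real.rpow_nonneg hnpos.le _)
    _ = (n : ℝ) ^ (-α + ε) := by
        rw [← Real.rpow_add hnpos]; congr 1; ring
end

section
/- Let (a_i)_{i≥1} be strictly positive reals with partial sums A_i and α ∈ (0,1). If for every ε > 0 eventually A_i ≥ i^{1-α-ε}, then for every ε > 0 eventually ∑_{i≥n} a_i / A_i² ≤ n^{α-1+ε}. -/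
/-- If `A i ≥ i^(1 - α + o(1))` with `α ∈ (0,1)`, then the tail sums satisfy
`∑_{i ≥ n} a i / (A i)^2 ≤ n^(α - 1 + o(1))`. -/
theorem stmt_3 (a : ℕ → ℝ) (ha : ∀ i, 0 < a i)
    (A : ℕ → ℝ) (hA : ∀ n, A n = ∑ i ∈ Finset.range (n + 1), a i)
    (α : ℝ) (hα : 0 < α) (hα1 : α < 1)
    (hlower : ∀ ε > (0 : ℝ), ∃ N : ℕ, ∀ i ≥ N, (i : ℝ) ^ (1 - α - ε) ≤ A i) :
    ∀ ε > (0 : ℝ), ∃ M : ℕ, ∀ n ≥ M,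
      (∑' i : ℕ, a (i + n) / (A (i + n)) ^ 2) ≤ (n : ℝ) ^ (α - 1 + ε) := by
  have hApos : ∀ n, 0 < A n := by
    intro n
    rw [hA]
    exact Finset.sum_pos (fun i _ => ha i) ⟨0, Finset.mem_range.2 (Nat.succ_pos n)⟩
  have hstep : ∀ m, A (m + 1) = A m + a (m + 1) := by
    intro m; rw [hA, hA, Finset.sum_range_succ]
  have key : ∀ m, a (m + 1) / (A (m + 1)) ^ 2 ≤ 1 / A m - 1 / A (m + 1) := by
    intro m
    have h1 := hApos m
    have h2 := hApos (m + 1)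
    have hle : A m ≤ A (m + 1) := by
      rw [hstep]; linarith [(ha (m + 1)).le]
    have e : 1 / A m - 1 / A (m + 1) = a (m + 1) / (A m * A (m + 1)) := by
      have hs := hstep m
      field_simp
      linarith
    rw [e]
    gcongr
    · exact (ha (m + 1)).le
    · rw [sq]; exact mul_le_mul_of_nonneg_right hle h2.le
  intro ε hε
  set ε0 := min ε ((1 - α) / 2) with hε0def
  have hε0 : 0 < ε0 := lt_min hε (by linarith)
  have hε0le : ε0 ≤ ε := min_le_left _ _
  have hp : 0 < 1 - α - ε0 := by
    have : ε0 ≤ (1 - α) / 2 := min_le_right _ _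
    linarith
  obtain ⟨N, hN⟩ := hlower (ε0 / 2) (by linarith)
  obtain ⟨N₀, hN₀⟩ := exists_nat_ge ((2 : ℝ) ^ (2 / ε0))
  refine ⟨max (N + 1) (max (N₀ + 1) 2), fun n hn => ?_⟩
  have h1n : N + 1 ≤ n := le_trans (le_max_left _ _) hn
  have h2n : N₀ + 1 ≤ n := le_trans (le_trans (le_max_left _ _) (le_max_right _ _)) hn
  have h3n : 2 ≤ n := le_trans (le_trans (le_max_right _ _) (le_max_right _ _)) hn
  obtain ⟨m, rfl⟩ : ∃ m, n = m + 1 := ⟨n - 1, by omega⟩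
  have hmN : N ≤ m := by omega
  have hmN₀ : N₀ ≤ m := by omega
  have hm1 : 1 ≤ m := by omega
  have hxm : (1 : ℝ) ≤ (m : ℝ) := by exact_mod_cast hm1
  -- Lower bound on A m
  have hAm : ((m : ℝ) + 1) ^ (1 - α - ε0) ≤ A m := by
    have hA1 : ((m : ℝ)) ^ (1 - α - ε0 / 2) ≤ A m := hN m hmN
    have hmge : ((2 : ℝ) ^ (2 / ε0)) ≤ (m : ℝ) := le_trans hN₀ (by exact_mod_cast hmN₀)
    have hx2 : ((2 : ℝ) ^ (2 / ε0)) ^ (ε0 / 2) ≤ (m : ℝ) ^ (ε0 / 2) :=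
      Real.rpow_le_rpow (by positivity) hmge (by positivity)
    have hpow2 : ((2 : ℝ) ^ (2 / ε0)) ^ (ε0 / 2) = 2 := by
      rw [← Real.rpow_mul (by norm_num)]
      rw [show (2 / ε0) * (ε0 / 2) = 1 by field_simp]
      norm_num
    have h2le : (2 : ℝ) ≤ (m : ℝ) ^ (ε0 / 2) := by rw [hpow2] at hx2; exact hx2
    have step1 : ((m : ℝ) + 1) ^ (1 - α - ε0) ≤ 2 * (m : ℝ) ^ (1 - α - ε0) := by
      calc ((m : ℝ) + 1) ^ (1 - α - ε0)
          ≤ (2 * (m : ℝ)) ^ (1 - α - ε0) :=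
            Real.rpow_le_rpow (by positivity) (by linarith) (by linarith)
        _ = (2 : ℝ) ^ (1 - α - ε0) * (m : ℝ) ^ (1 - α - ε0) :=
            Real.mul_rpow (by norm_num) (by positivity)
        _ ≤ 2 * (m : ℝ) ^ (1 - α - ε0) := by
            have h2 : (2 : ℝ) ^ (1 - α - ε0) ≤ (2 : ℝ) ^ (1 : ℝ) :=
              Real.rpow_le_rpow_of_exponent_le (by norm_num) (by linarith)
            rw [Real.rpow_one] at h2
            have := Real.rpow_nonneg (show (0:ℝ) ≤ (m:ℝ) by positivity) (1 - α - ε0)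
            nlinarith
    have step2 : 2 * (m : ℝ) ^ (1 - α - ε0) ≤ (m : ℝ) ^ (1 - α - ε0 / 2) := by
      have hmul : (m : ℝ) ^ (1 - α - ε0 / 2) =
          (m : ℝ) ^ (ε0 / 2) * (m : ℝ) ^ (1 - α - ε0) := by
        rw [← Real.rpow_add (by linarith : (0:ℝ) < (m:ℝ))]
        ring_nf
      rw [hmul]
      have := Real.rpow_nonneg (show (0:ℝ) ≤ (m:ℝ) by positivity) (1 - α - ε0)
      nlinarith
    linarith
  have hAmpos := hApos m
  -- Tail bound via telescoping
  have htail : (∑' i : ℕ, a (i + (m + 1)) / (A (i + (m + 1))) ^ 2) ≤ 1 / A m := by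
    apply Real.tsum_le_of_sum_range_le
    · intro i
      have h1 := hApos (i + (m + 1))
      have h2 := (ha (i + (m + 1))).le
      positivity
    · intro K
      calc ∑ i ∈ Finset.range K, a (i + (m + 1)) / (A (i + (m + 1))) ^ 2
          ≤ ∑ i ∈ Finset.range K, (1 / A (i + m) - 1 / A (i + m + 1)) := by
            apply Finset.sum_le_sum
            intro i _
            exact key (i + m)
        _ = 1 / A m - 1 / A (K + m) := by
            have := Finset.sum_range_sub' (fun i => 1 / A (i + m)) K
            simpa [Nat.succ_add, add_right_comm] using this
        _ ≤ 1 / A m := by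
            have := hApos (K + m)
            have : 0 ≤ 1 / A (K + m) := by positivity
            linarith
  have hbase : (1 : ℝ) ≤ (m : ℝ) + 1 := by linarith
  have hfinal : (1 : ℝ) / A m ≤ ((m : ℝ) + 1) ^ (α - 1 + ε) := by
    calc (1 : ℝ) / A m ≤ 1 / ((m : ℝ) + 1) ^ (1 - α - ε0) :=
          one_div_le_one_div_of_le (by positivity) hAm
      _ = ((m : ℝ) + 1) ^ (α - 1 + ε0) := by
          rw [show α - 1 + ε0 = -(1 - α - ε0) by ring,
            Real.rpow_neg (by positivity), one_div]
      _ ≤ ((m : ℝ) + 1) ^ (α - 1 + ε) :=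
          Real.rpow_le_rpow_of_exponent_le hbase (by linarith)
  have hcast : ((m + 1 : ℕ) : ℝ) = (m : ℝ) + 1 := by push_cast; ring
  rw [hcast]
  exact le_trans htail hfinal
end

section
/- Let (a_i)_{i≥1} be bounded positive reals with partial sums A_i, and let (U_i, V_i)_{i≥1} be independent uniform (0,1) random variables. Define X = ∑_{i=1}^∞ a_i V_i 1_{U_i ≤ a_i/A_i}. If H(a) := ∑_{i≥1} a_i²/A_i < ∞, then for every λ ∈ [0, (sup_i a_i)^{-1}], one has E[exp(λ X)] ≤ exp(λ H(a)). -/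
open MeasureTheory ProbabilityTheory

lemma exp_le_one_add_add_sq {x : ℝ} (h0 : 0 ≤ x) (h1 : x ≤ 1) :
    Real.exp x ≤ 1 + x + x ^ 2 := by
  have h := Real.exp_bound' h0 h1 (n := 2) (by norm_num)
  norm_num [Finset.sum_range_succ] at h
  nlinarith [sq_nonneg x]

lemma vol_restrict_Iic {p : ℝ} (h0 : 0 < p) (h1 : p ≤ 1) :
    (volume.restrict (Set.Ioo (0:ℝ) 1)) (Set.Iic p) = ENNReal.ofReal p := by
  rw [Measure.restrict_apply measurableSet_Iic]
  refine le_antisymm ?_ ?_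
  · calc volume (Set.Iic p ∩ Set.Ioo 0 1) ≤ volume (Set.Ioc (0:ℝ) p) := by
          apply measure_mono
          rintro x ⟨hx1, hx2, hx3⟩
          exact ⟨hx2, hx1⟩
      _ = ENNReal.ofReal p := by rw [Real.volume_Ioc]; norm_num
  · calc ENNReal.ofReal p = volume (Set.Ioo (0:ℝ) p) := by rw [Real.volume_Ioo]; norm_num
      _ ≤ volume (Set.Iic p ∩ Set.Ioo 0 1) := by
          apply measure_mono
          rintro x ⟨hx1, hx2⟩
          exact ⟨hx2.le, hx1, lt_of_lt_of_le hx2 h1⟩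

lemma int_Ioo_id : ∫ x in Set.Ioo (0:ℝ) 1, x = 1/2 := by
  rw [← MeasureTheory.integral_Ioc_eq_integral_Ioo, ← intervalIntegral.integral_of_le zero_le_one]
  simp [integral_id]


/-- Exponential moment bound: if the `a i` are positive and bounded,
`H(a) = ∑ a i ^2 / A i < ∞` and `X = ∑ a i * V i * 1_{U i ≤ a i / A i}`, then for
`0 ≤ λ ≤ (sup_i a i)⁻¹` we have `E[exp (λ X)] ≤ exp (λ H(a))`. -/
theorem stmt_5 {Ω : Type*} [MeasureSpace Ω] (hprob : IsProbabilityMeasure (ℙ : Measure Ω))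
    (a : ℕ → ℝ) (ha : ∀ i, 0 < a i) (hbdd : BddAbove (Set.range a))
    (A : ℕ → ℝ) (hA : ∀ n, A n = ∑ i ∈ Finset.range (n + 1), a i)
    (hH : Summable (fun i => (a i) ^ 2 / A i))
    (X : ℕ × Bool → Ω → ℝ) (hmeas : ∀ p, Measurable (X p))
    (hindep : iIndepFun (m := fun _ => Real.measurableSpace) X ℙ)
    (hunif : ∀ p, Measure.map (X p) ℙ = volume.restrict (Set.Ioo (0 : ℝ) 1))
    (U V : ℕ → Ω → ℝ) (hU : ∀ i, U i = X (i, true)) (hV : ∀ i, V i = X (i, false))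
    (lam : ℝ) (hlam0 : 0 ≤ lam) (hlam1 : lam ≤ (⨆ i, a i)⁻¹) :
    ∫ ω, Real.exp (lam * ∑' i : ℕ,
        a i * V i ω * (if U i ω ≤ a i / A i then (1 : ℝ) else 0)) ∂ℙ
      ≤ Real.exp (lam * ∑' i : ℕ, (a i) ^ 2 / A i) := by
  classical
  -- basic facts
  have hsup_mem : ∀ i, a i ≤ ⨆ j, a j := fun i => le_ciSup hbdd i
  have hsup_pos : 0 < ⨆ j, a j := lt_of_lt_of_le (ha 0) (hsup_mem 0)
  have hla : ∀ i, lam * a i ≤ 1 := by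
    intro i
    calc lam * a i ≤ (⨆ j, a j)⁻¹ * (⨆ j, a j) :=
          mul_le_mul hlam1 (hsup_mem i) (ha i).le (inv_nonneg.mpr hsup_pos.le)
      _ = 1 := inv_mul_cancel₀ hsup_pos.ne'
  have hA_pos : ∀ i, 0 < A i := by
    intro i; rw [hA]
    exact Finset.sum_pos (fun j _ => ha j) ⟨0, by simp⟩
  have haA : ∀ i, a i ≤ A i := by
    intro i; rw [hA]
    exact Finset.single_le_sum (f := a) (fun j _ => (ha j).le) (by simp)
  have hp_pos : ∀ i, 0 < a i / A i := fun i => div_pos (ha i) (hA_pos i)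
  have hp_le : ∀ i, a i / A i ≤ 1 := fun i => div_le_one_of_le₀ (haA i) (hA_pos i).le
  set Y : ℕ → Ω → ℝ := fun i ω => a i * V i ω * (if U i ω ≤ a i / A i then (1:ℝ) else 0)
    with hY_def
  have hVmeas : ∀ i, Measurable (V i) := fun i => (hV i) ▸ hmeas (i, false)
  have hUmeas : ∀ i, Measurable (U i) := fun i => (hU i) ▸ hmeas (i, true)
  have hYmeas : ∀ i, Measurable (Y i) := fun i =>
    (measurable_const.mul (hVmeas i)).mul
      (Measurable.ite (measurableSet_le (hUmeas i) measurable_const) measurable_const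
        measurable_const)
  -- a.e. facts
  have hae : ∀ q : ℕ × Bool, ∀ᵐ ω ∂ℙ, X q ω ∈ Set.Ioo (0:ℝ) 1 := by
    intro q
    have h1 : ℙ (X q ⁻¹' Set.Ioo 0 1) = 1 := by
      rw [← Measure.map_apply (hmeas q) measurableSet_Ioo, hunif q]
      simp [Real.volume_Ioo]
    have h2 : ℙ (X q ⁻¹' Set.Ioo 0 1)ᶜ = 0 := by
      rw [measure_compl ((hmeas q) measurableSet_Ioo) (measure_ne_top _ _), h1, measure_univ,
        tsub_self]
    rw [MeasureTheory.ae_iff]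
    exact h2
  have hVae : ∀ i, ∀ᵐ ω ∂ℙ, V i ω ∈ Set.Ioo (0:ℝ) 1 := fun i => (hV i) ▸ hae (i, false)
  have hG : ∀ᵐ ω ∂ℙ, ∀ i, V i ω ∈ Set.Ioo (0:ℝ) 1 := ae_all_iff.mpr hVae
  -- ENNReal exponential factors
  set h : ℕ → Ω → ENNReal := fun i ω => ENNReal.ofReal (Real.exp (lam * Y i ω)) with hh_def
  have hhmeas : ∀ i, Measurable (h i) := fun i =>
    ENNReal.measurable_ofReal.comp (Real.measurable_exp.comp ((hYmeas i).const_mul lam))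
  set g : ℕ → Ω → ENNReal := fun n ω => ∏ i ∈ Finset.range n, h i ω with hg_def
  have hgmeas : ∀ n, Measurable (g n) := fun n => Finset.measurable_prod _ (fun i _ => hhmeas i)
  have hg_eq : ∀ n ω, g n ω = ENNReal.ofReal (Real.exp (lam * ∑ i ∈ Finset.range n, Y i ω)) := by
    intro n ω
    rw [Finset.mul_sum, Real.exp_sum, ENNReal.ofReal_prod_of_nonneg
      (fun i _ => (Real.exp_pos _).le)]
  -- single factor bound
  have hfactor : ∀ i, ∫⁻ ω, h i ω ∂ℙ ≤ ENNReal.ofReal (Real.exp (lam * (a i ^ 2 / A i))) := by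
    intro i
    set c : ℝ := lam * a i * (1 + lam * a i) with hc_def
    have hc0 : 0 ≤ c := mul_nonneg (mul_nonneg hlam0 (ha i).le) (by nlinarith [mul_nonneg hlam0 (ha i).le])
    set W : Ω → ℝ := fun ω => V i ω * (if U i ω ≤ a i / A i then (1:ℝ) else 0) with hW_def
    have hWmeas : Measurable W := (hVmeas i).mul
      (Measurable.ite (measurableSet_le (hUmeas i) measurable_const) measurable_const
        measurable_const)
    have hla_i := hla i
    have hla0 : 0 ≤ lam * a i := mul_nonneg hlam0 (ha i).le
    -- pointwise bound
    have hpt : ∀ᵐ ω ∂ℙ, h i ω ≤ ENNReal.ofReal (1 + c * W ω) := by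
      filter_upwards [hVae i] with ω hVω
      apply ENNReal.ofReal_le_ofReal
      obtain ⟨hV0, hV1⟩ := hVω
      by_cases hind : U i ω ≤ a i / A i
      · have hY_eq : Y i ω = a i * V i ω := by simp [hY_def, hind]
        have hW_eq : W ω = V i ω := by simp [hW_def, hind]
        rw [hY_eq, hW_eq]
        have hx0 : 0 ≤ lam * (a i * V i ω) := mul_nonneg hlam0 (mul_nonneg (ha i).le hV0.le)
        have hx1 : lam * (a i * V i ω) ≤ 1 := by nlinarith
        calc Real.exp (lam * (a i * V i ω)) ≤ 1 + lam * (a i * V i ω)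
              + (lam * (a i * V i ω)) ^ 2 := exp_le_one_add_add_sq hx0 hx1
          _ ≤ 1 + c * V i ω := by
              nlinarith [mul_nonneg (mul_nonneg hla0 hla0)
                (mul_nonneg hV0.le (sub_nonneg.mpr hV1.le)), hc_def]
      · have hY_eq : Y i ω = 0 := by simp [hY_def, hind]
        have hW_eq : W ω = 0 := by simp [hW_def, hind]
        rw [hY_eq, hW_eq]
        simp
    -- W is a.e. bounded and nonneg
    have hWae : ∀ᵐ ω ∂ℙ, 0 ≤ W ω ∧ W ω ≤ 1 := by
      filter_upwards [hVae i] with ω hVω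
      obtain ⟨hV0, hV1⟩ := hVω
      constructor
      · rw [hW_def]; by_cases hind : U i ω ≤ a i / A i <;> simp [hind] <;> positivity
      · rw [hW_def]; by_cases hind : U i ω ≤ a i / A i <;> simp [hind] <;> linarith
    have hWint : Integrable W ℙ := by
      refine Integrable.mono' (integrable_const 1) hWmeas.aestronglyMeasurable ?_
      filter_upwards [hWae] with ω ⟨h0, h1⟩
      rw [Real.norm_eq_abs, abs_of_nonneg h0]; exact h1
    have hint : Integrable (fun ω => 1 + c * W ω) ℙ := by
      exact (integrable_const 1).add (hWint.const_mul c)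
    have hnn : 0 ≤ᵐ[ℙ] fun ω => 1 + c * W ω := by
      filter_upwards [hWae] with ω ⟨h0, _⟩
      have : 0 ≤ c * W ω := mul_nonneg hc0 h0
      simp only [Pi.zero_apply]; linarith
    -- independence of V i and the indicator
    have hindepVU : IndepFun (V i) (fun ω => if U i ω ≤ a i / A i then (1:ℝ) else 0) ℙ := by
      have hbase : IndepFun (X (i, false)) (X (i, true)) ℙ := hindep.indepFun (by simp)
      have := hbase.comp measurable_id
        (Measurable.ite (measurableSet_Iic (a := a i / A i)) measurable_const measurable_const
          : Measurable fun u : ℝ => if u ≤ a i / A i then (1:ℝ) else 0)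
      convert this using 1
      · rw [hV]; rfl
      · funext ω; rw [hU]; rfl
    -- ∫ V i = 1/2
    have hEV : ∫ ω, V i ω ∂ℙ = 1/2 := by
      have h1 : ∫ x, x ∂(Measure.map (V i) ℙ) = ∫ ω, V i ω ∂ℙ :=
        integral_map (hVmeas i).aemeasurable aestronglyMeasurable_id
      rw [← h1, hV, hunif (i, false)]
      exact int_Ioo_id
    -- ∫ indicator = a i / A i
    have hEind : ∫ ω, (if U i ω ≤ a i / A i then (1:ℝ) else 0) ∂ℙ = a i / A i := by
      have heq : (fun ω => if U i ω ≤ a i / A i then (1:ℝ) else 0)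
          = (U i ⁻¹' Set.Iic (a i / A i)).indicator (fun _ => (1:ℝ)) := by
        funext ω; simp [Set.indicator_apply, Set.mem_preimage, Set.mem_Iic]
      rw [heq, integral_indicator_const (1:ℝ) ((hUmeas i) measurableSet_Iic)]
      rw [measureReal_def, ← Measure.map_apply (hUmeas i) measurableSet_Iic, hU, hunif (i, true),
        vol_restrict_Iic (hp_pos i) (hp_le i)]
      rw [ENNReal.toReal_ofReal (hp_pos i).le]; simp
    have hEW : ∫ ω, W ω ∂ℙ = (1/2) * (a i / A i) := by
      have := hindepVU.integral_mul_eq_mul_integral (hVmeas i).aestronglyMeasurable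
        (Measurable.aestronglyMeasurable
          (Measurable.ite (measurableSet_le (hUmeas i) measurable_const) measurable_const
            measurable_const))
      rw [hW_def]
      calc ∫ ω, V i ω * (if U i ω ≤ a i / A i then (1:ℝ) else 0) ∂ℙ
          = (∫ ω, V i ω ∂ℙ) * ∫ ω, (if U i ω ≤ a i / A i then (1:ℝ) else 0) ∂ℙ := this
        _ = (1/2) * (a i / A i) := by rw [hEV, hEind]
    calc ∫⁻ ω, h i ω ∂ℙ ≤ ∫⁻ ω, ENNReal.ofReal (1 + c * W ω) ∂ℙ := lintegral_mono_ae hpt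
      _ = ENNReal.ofReal (∫ ω, 1 + c * W ω ∂ℙ) :=
          (ofReal_integral_eq_lintegral_ofReal hint hnn).symm
      _ ≤ ENNReal.ofReal (Real.exp (lam * (a i ^ 2 / A i))) := by
          apply ENNReal.ofReal_le_ofReal
          rw [integral_add (integrable_const 1) (hWint.const_mul c), integral_const,
            MeasureTheory.integral_const_mul, hEW]
          simp only [probReal_univ, ENNReal.toReal_one, smul_eq_mul, one_mul]
          have haA_eq : a i ^ 2 / A i = a i * (a i / A i) := by
            rw [sq, mul_div_assoc]
          have hple := hp_le i
          have hppos := (hp_pos i).le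
          have : c * ((1/2) * (a i / A i)) ≤ lam * (a i ^ 2 / A i) := by
            rw [haA_eq, hc_def]
            nlinarith [mul_nonneg (mul_nonneg hla0 hppos) (sub_nonneg.mpr hla_i)]
          have h2 : 1 + lam * (a i ^ 2 / A i) ≤ Real.exp (lam * (a i ^ 2 / A i)) := by
            have := Real.add_one_le_exp (lam * (a i ^ 2 / A i)); linarith
          linarith
  -- nonnegativity of Y a.e.
  have hYnn : ∀ᵐ ω ∂ℙ, ∀ i, 0 ≤ Y i ω := by
    filter_upwards [hG] with ω hω i
    rw [hY_def]; dsimp only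
    by_cases hind : U i ω ≤ a i / A i <;> simp [hind]
    exact mul_nonneg (ha i).le (hω i).1.le
  -- independence product step
  have hprod : ∀ n, ∫⁻ ω, g (n+1) ω ∂ℙ = (∫⁻ ω, g n ω ∂ℙ) * ∫⁻ ω, h n ω ∂ℙ := by
    intro n
    set S : Finset (ℕ × Bool) := Finset.range n ×ˢ (Finset.univ : Finset Bool) with hS_def
    set T : Finset (ℕ × Bool) := ({n} : Finset ℕ) ×ˢ (Finset.univ : Finset Bool) with hT_def
    have hSdisj : Disjoint S T := by
      rw [Finset.disjoint_left]
      rintro ⟨i, b⟩ hS hT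
      rw [hS_def, Finset.mem_product, Finset.mem_range] at hS
      rw [hT_def, Finset.mem_product, Finset.mem_singleton] at hT
      omega
    have hmf : ∀ i ∈ Finset.range n, ((i, false) : ℕ × Bool) ∈ S := fun i hi =>
      Finset.mem_product.mpr ⟨hi, Finset.mem_univ _⟩
    have hmt : ∀ i ∈ Finset.range n, ((i, true) : ℕ × Bool) ∈ S := fun i hi =>
      Finset.mem_product.mpr ⟨hi, Finset.mem_univ _⟩
    have hnf : ((n, false) : ℕ × Bool) ∈ T :=
      Finset.mem_product.mpr ⟨Finset.mem_singleton_self n, Finset.mem_univ _⟩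
    have hnt : ((n, true) : ℕ × Bool) ∈ T :=
      Finset.mem_product.mpr ⟨Finset.mem_singleton_self n, Finset.mem_univ _⟩
    set φ : ({x // x ∈ S} → ℝ) → ENNReal := fun x =>
      ∏ i ∈ (Finset.range n).attach, ENNReal.ofReal (Real.exp (lam * (a i.1 *
        x ⟨(i.1, false), hmf i.1 i.2⟩ *
        (if x ⟨(i.1, true), hmt i.1 i.2⟩ ≤ a i.1 / A i.1 then (1:ℝ) else 0)))) with hφ_def
    set ψ : ({x // x ∈ T} → ℝ) → ENNReal := fun x =>
      ENNReal.ofReal (Real.exp (lam * (a n * x ⟨(n, false), hnf⟩ *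
        (if x ⟨(n, true), hnt⟩ ≤ a n / A n then (1:ℝ) else 0)))) with hψ_def
    have hφm : Measurable φ := by
      apply Finset.measurable_prod
      intro i _
      refine ENNReal.measurable_ofReal.comp (Real.measurable_exp.comp (Measurable.const_mul ?_ lam))
      exact (measurable_const.mul (measurable_pi_apply _)).mul
        (Measurable.ite (measurableSet_le (measurable_pi_apply _) measurable_const)
          measurable_const measurable_const)
    have hψm : Measurable ψ := by
      refine ENNReal.measurable_ofReal.comp (Real.measurable_exp.comp (Measurable.const_mul ?_ lam))
      exact (measurable_const.mul (measurable_pi_apply _)).mul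
        (Measurable.ite (measurableSet_le (measurable_pi_apply _) measurable_const)
          measurable_const measurable_const)
    have hbase := hindep.indepFun_finset S T hSdisj hmeas
    have hcomp : IndepFun (fun ω => φ (fun q : {x // x ∈ S} => X q.1 ω))
        (fun ω => ψ (fun q : {x // x ∈ T} => X q.1 ω)) ℙ := hbase.comp hφm hψm
    have hid1 : (fun ω => φ (fun q : {x // x ∈ S} => X q.1 ω)) = g n := by
      funext ω
      rw [hφ_def, hg_def]
      dsimp only
      rw [← Finset.prod_attach (Finset.range n)
        (fun i => h i ω)]
      apply Finset.prod_congr rfl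
      intro i _
      rw [hh_def, hY_def]
      dsimp only
      rw [hV i.1, hU i.1]
    have hid2 : (fun ω => ψ (fun q : {x // x ∈ T} => X q.1 ω)) = h n := by
      funext ω
      rw [hψ_def, hh_def, hY_def]
      dsimp only
      rw [hV n, hU n]
    rw [hid1, hid2] at hcomp
    calc ∫⁻ ω, g (n+1) ω ∂ℙ = ∫⁻ ω, g n ω * h n ω ∂ℙ := by
          apply lintegral_congr
          intro ω
          rw [hg_def]
          exact Finset.prod_range_succ _ n
      _ = (∫⁻ ω, g n ω ∂ℙ) * ∫⁻ ω, h n ω ∂ℙ :=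
          lintegral_mul_eq_lintegral_mul_lintegral_of_indepFun''
            (hgmeas n).aemeasurable (hhmeas n).aemeasurable hcomp
  -- bound on finite products
  have hsum_le : ∀ n, ∑ i ∈ Finset.range n, a i ^ 2 / A i ≤ ∑' i, a i ^ 2 / A i := fun n =>
    Summable.sum_le_tsum _ (fun i _ => div_nonneg (sq_nonneg _) (hA_pos i).le) hH
  have hgbound : ∀ n, ∫⁻ ω, g n ω ∂ℙ
      ≤ ENNReal.ofReal (Real.exp (lam * ∑ i ∈ Finset.range n, a i ^ 2 / A i)) := by
    intro n
    induction n with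
    | zero =>
        rw [hg_def]
        simp [lintegral_one, measure_univ]
    | succ n ih =>
        rw [hprod n]
        calc (∫⁻ ω, g n ω ∂ℙ) * ∫⁻ ω, h n ω ∂ℙ
            ≤ ENNReal.ofReal (Real.exp (lam * ∑ i ∈ Finset.range n, a i ^ 2 / A i)) *
              ENNReal.ofReal (Real.exp (lam * (a n ^ 2 / A n))) := mul_le_mul' ih (hfactor n)
          _ = ENNReal.ofReal (Real.exp (lam * ∑ i ∈ Finset.range (n+1), a i ^ 2 / A i)) := by
              rw [← ENNReal.ofReal_mul (Real.exp_pos _).le, ← Real.exp_add,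
                Finset.sum_range_succ, mul_add]
  have hglim : ∀ n, ∫⁻ ω, g n ω ∂ℙ
      ≤ ENNReal.ofReal (Real.exp (lam * ∑' i, a i ^ 2 / A i)) := fun n =>
    (hgbound n).trans (ENNReal.ofReal_le_ofReal (Real.exp_le_exp.mpr
      (mul_le_mul_of_nonneg_left (hsum_le n) hlam0)))
  -- main lintegral bound
  have hmain : ∫⁻ ω, ENNReal.ofReal (Real.exp (lam * ∑' i, Y i ω)) ∂ℙ
      ≤ ENNReal.ofReal (Real.exp (lam * ∑' i, a i ^ 2 / A i)) := by
    have step1 : ∫⁻ ω, ENNReal.ofReal (Real.exp (lam * ∑' i, Y i ω)) ∂ℙ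
        ≤ ∫⁻ ω, ⨆ n, g n ω ∂ℙ := by
      apply lintegral_mono_ae
      filter_upwards [hYnn] with ω hNN
      by_cases hs : Summable fun i => Y i ω
      · have ht : Filter.Tendsto (fun n => ∑ i ∈ Finset.range n, Y i ω) Filter.atTop
            (nhds (∑' i, Y i ω)) := hs.hasSum.tendsto_sum_nat
        have ht2 : Filter.Tendsto
            (fun n => ENNReal.ofReal (Real.exp (lam * ∑ i ∈ Finset.range n, Y i ω)))
            Filter.atTop (nhds (ENNReal.ofReal (Real.exp (lam * ∑' i, Y i ω)))) :=
          (ENNReal.continuous_ofReal.tendsto _).comp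
            ((Real.continuous_exp.tendsto _).comp (ht.const_mul lam))
        refine le_of_tendsto' ht2 (fun n => ?_)
        rw [← hg_eq n ω]
        exact le_iSup (fun k => g k ω) n
      · rw [tsum_eq_zero_of_not_summable hs]
        have h0 : ENNReal.ofReal (Real.exp (lam * 0)) = g 0 ω := by
          rw [hg_eq 0 ω]; simp
        rw [h0]
        exact le_iSup (fun k => g k ω) 0
    have step2 : ∫⁻ ω, ⨆ n, g n ω ∂ℙ = ⨆ n, ∫⁻ ω, g n ω ∂ℙ := by
      refine lintegral_iSup' (fun n => (hgmeas n).aemeasurable) ?_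
      filter_upwards [hYnn] with ω hNN
      intro m n hmn
      refine Finset.prod_le_prod_of_subset_of_one_le' (Finset.range_subset_range.mpr hmn) ?_
      intro i _ _
      rw [hh_def]
      dsimp only
      exact ENNReal.one_le_ofReal.mpr (Real.one_le_exp (mul_nonneg hlam0 (hNN i)))
    exact step1.trans (step2.trans_le (iSup_le hglim))
  -- convert to Bochner integral
  have hfae : (fun ω => Real.exp (lam * ∑' i, Y i ω)) =ᵐ[ℙ]
      (fun ω => Real.exp (lam * (∑' i, ENNReal.ofReal (Y i ω)).toReal)) := by
    filter_upwards [hYnn] with ω hNN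
    suffices hsuff : (∑' i, Y i ω) = (∑' i, ENNReal.ofReal (Y i ω)).toReal by rw [hsuff]
    by_cases hs : Summable fun i => Y i ω
    · rw [← ENNReal.ofReal_tsum_of_nonneg hNN hs,
        ENNReal.toReal_ofReal (tsum_nonneg (fun i => hNN i))]
    · rw [tsum_eq_zero_of_not_summable hs]
      have htop : (∑' i, ENNReal.ofReal (Y i ω)) = ⊤ := by
        by_contra hne
        apply hs
        refine (ENNReal.summable_toReal hne).congr fun i => ?_
        rw [ENNReal.toReal_ofReal (hNN i)]
      rw [htop, ENNReal.toReal_top]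
  have hmeas2 : Measurable fun ω => Real.exp (lam * (∑' i, ENNReal.ofReal (Y i ω)).toReal) :=
    Real.measurable_exp.comp
      ((Measurable.ennreal_tsum
        (fun i => ENNReal.measurable_ofReal.comp (hYmeas i))).ennreal_toReal.const_mul lam)
  have hlint_eq : ∫⁻ ω, ENNReal.ofReal (Real.exp (lam * (∑' i, ENNReal.ofReal (Y i ω)).toReal)) ∂ℙ
      = ∫⁻ ω, ENNReal.ofReal (Real.exp (lam * ∑' i, Y i ω)) ∂ℙ := by
    apply lintegral_congr_ae
    filter_upwards [hfae] with ω hω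
    rw [hω]
  calc ∫ ω, Real.exp (lam * ∑' i, Y i ω) ∂ℙ
      = ∫ ω, Real.exp (lam * (∑' i, ENNReal.ofReal (Y i ω)).toReal) ∂ℙ :=
        integral_congr_ae hfae
    _ = (∫⁻ ω, ENNReal.ofReal (Real.exp (lam * (∑' i, ENNReal.ofReal (Y i ω)).toReal)) ∂ℙ).toReal :=
        integral_eq_lintegral_of_nonneg_ae
          (Filter.Eventually.of_forall fun ω => (Real.exp_pos _).le)
          hmeas2.aestronglyMeasurable
    _ ≤ Real.exp (lam * ∑' i, a i ^ 2 / A i) :=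
        ENNReal.toReal_le_of_le_ofReal (Real.exp_pos _).le (hlint_eq.trans_le hmain)
end

section
/- Let (a_i)_{i≥1} be bounded positive reals with partial sums A_i and let (U_i, V_i) be independent uniform (0,1) random variables. Then the series ∑_{i≥1} a_i V_i 1_{U_i ≤ a_i/A_i} converges almost surely if and only if ∑_{i≥1} a_i²/A_i < ∞. -/
open MeasureTheory ProbabilityTheory Filter

/-- For bounded positive `a i`, the random series
`∑ a i * V i * 1_{U i ≤ a i / A i}` converges almost surely if and only if
`∑ a i ^ 2 / A i < ∞`. -/
theorem stmt_6 {Ω : Type*} [MeasureSpace Ω] (hprob : IsProbabilityMeasure (ℙ : Measure Ω))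
    (a : ℕ → ℝ) (ha : ∀ i, 0 < a i) (hbdd : BddAbove (Set.range a))
    (A : ℕ → ℝ) (hA : ∀ n, A n = ∑ i ∈ Finset.range (n + 1), a i)
    (X : ℕ × Bool → Ω → ℝ) (hmeas : ∀ p, Measurable (X p))
    (hindep : iIndepFun (m := fun _ => Real.measurableSpace) X ℙ)
    (hunif : ∀ p, Measure.map (X p) ℙ = volume.restrict (Set.Ioo (0 : ℝ) 1))
    (U V : ℕ → Ω → ℝ) (hU : ∀ i, U i = X (i, true)) (hV : ∀ i, V i = X (i, false)) :
    (∀ᵐ ω ∂ℙ, ∃ L : ℝ, Tendsto (fun n => ∑ i ∈ Finset.range n,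
        a i * V i ω * (if U i ω ≤ a i / A i then (1 : ℝ) else 0)) atTop (nhds L))
      ↔ Summable (fun i => (a i) ^ 2 / A i) := by
  classical
  haveI := hprob
  obtain ⟨C, hCub⟩ := hbdd
  have hC : ∀ i, a i ≤ C := fun i => hCub ⟨i, rfl⟩
  have hCpos : 0 < C := (ha 0).trans_le (hC 0)
  have hApos : ∀ n, 0 < A n := by
    intro n
    rw [hA n]
    exact Finset.sum_pos (fun i _ => ha i) ⟨0, Finset.mem_range.2 (Nat.succ_pos n)⟩
  have haA : ∀ n, a n ≤ A n := by
    intro n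
    rw [hA n]
    exact Finset.single_le_sum (fun i _ => (ha i).le)
      (Finset.mem_range.2 (Nat.lt_succ_self n))
  set p : ℕ → ℝ := fun i => a i / A i with hpdef
  have hp0 : ∀ i, 0 < p i := fun i => div_pos (ha i) (hApos i)
  have hp1 : ∀ i, p i ≤ 1 := fun i => (div_le_one (hApos i)).2 (haA i)
  set r : ℕ → ℝ := fun i => a i ^ 2 / A i with hrdef
  have hr : ∀ i, r i = a i * p i := by
    intro i
    simp only [r, p, pow_two, mul_div_assoc]
  have hr0 : ∀ i, 0 ≤ r i := fun i => div_nonneg (sq_nonneg _) (hApos i).le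
  set Y : ℕ → Ω → ℝ := fun i ω =>
    a i * X (i, false) ω * (if X (i, true) ω ≤ p i then (1 : ℝ) else 0) with hYdef
  have hYeq : ∀ i ω, a i * V i ω * (if U i ω ≤ a i / A i then (1 : ℝ) else 0) = Y i ω := by
    intro i ω; simp only [Y, hU, hV, p]
  simp only [hYeq]
  have hYmeas : ∀ i, Measurable (Y i) := by
    intro i
    exact (measurable_const.mul (hmeas (i, false))).mul
      (Measurable.ite (measurableSet_le (hmeas (i, true)) measurable_const)
        measurable_const measurable_const)
  -- basic measure computations
  have hmap : ∀ q (s : Set ℝ), MeasurableSet s → ℙ (X q ⁻¹' s) = volume (s ∩ Set.Ioo 0 1) := by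
    intro q s hs
    rw [← Measure.map_apply (hmeas q) hs, hunif q, Measure.restrict_apply hs]
  have hvolIic : ∀ t : ℝ, 0 < t → t ≤ 1 →
      volume (Set.Iic t ∩ Set.Ioo 0 1) = ENNReal.ofReal t := by
    intro t ht0 ht1
    apply le_antisymm
    · calc volume (Set.Iic t ∩ Set.Ioo 0 1) ≤ volume (Set.Ioc 0 t) := by
            apply measure_mono
            rintro x ⟨h1, h2, h3⟩
            exact ⟨h2, h1⟩
        _ = ENNReal.ofReal t := by rw [Real.volume_Ioc, sub_zero]
    · calc ENNReal.ofReal t = volume (Set.Ioo 0 t) := by rw [Real.volume_Ioo, sub_zero]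
        _ ≤ volume (Set.Iic t ∩ Set.Ioo 0 1) := by
            apply measure_mono
            rintro x ⟨h1, h2⟩
            exact ⟨h2.le, h1, h2.trans_le ht1⟩
  have hvolIci : volume (Set.Ici (1 / 2 : ℝ) ∩ Set.Ioo 0 1) = ENNReal.ofReal (1 / 2) := by
    apply le_antisymm
    · calc volume (Set.Ici (1 / 2 : ℝ) ∩ Set.Ioo 0 1) ≤ volume (Set.Ico (1 / 2 : ℝ) 1) := by
            apply measure_mono
            rintro x ⟨h1, h2, h3⟩
            exact ⟨h1, h3⟩
        _ = ENNReal.ofReal (1 / 2) := by rw [Real.volume_Ico]; norm_num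
    · calc ENNReal.ofReal (1 / 2 : ℝ) = volume (Set.Ioo (1 / 2 : ℝ) 1) := by
            rw [Real.volume_Ioo]; norm_num
        _ ≤ volume (Set.Ici (1 / 2 : ℝ) ∩ Set.Ioo 0 1) := by
            apply measure_mono
            rintro x ⟨h1, h2⟩
            exact ⟨h1.le, by linarith, h2⟩
  have hPU : ∀ i, ℙ (X (i, true) ⁻¹' Set.Iic (p i)) = ENNReal.ofReal (p i) := by
    intro i
    rw [hmap _ _ measurableSet_Iic, hvolIic (p i) (hp0 i) (hp1 i)]
  have hPV : ∀ i, ℙ (X (i, false) ⁻¹' Set.Ici (1 / 2)) = ENNReal.ofReal (1 / 2) := by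
    intro i
    rw [hmap _ _ measurableSet_Ici, hvolIci]
  have hV01 : ∀ᵐ ω ∂ℙ, ∀ i : ℕ, X (i, false) ω ∈ Set.Ioo (0 : ℝ) 1 := by
    rw [ae_all_iff]
    intro i
    have h1 : ℙ (X (i, false) ⁻¹' Set.Ioo 0 1) = 1 := by
      rw [hmap _ _ measurableSet_Ioo, Set.inter_self, Real.volume_Ioo, sub_zero,
        ENNReal.ofReal_one]
    have h2 : ℙ (X (i, false) ⁻¹' Set.Ioo 0 1)ᶜ = 0 := by
      rw [measure_compl ((hmeas (i, false)) measurableSet_Ioo) (measure_ne_top _ _), h1,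
        measure_univ, tsub_self]
    filter_upwards [measure_eq_zero_iff_ae_notMem.mp h2] with ω hω
    simpa using hω
  -- the ENNReal-valued total sum
  set G : Ω → ENNReal := fun ω => ∑' i, ENNReal.ofReal (Y i ω) with hGdef
  have hGmeas : Measurable G :=
    Measurable.ennreal_tsum fun i => (hYmeas i).ennreal_ofReal
  have hYnn : ∀ ω, (∀ i : ℕ, X (i, false) ω ∈ Set.Ioo (0:ℝ) 1) → ∀ i, 0 ≤ Y i ω := by
    intro ω hω i
    have h1 : 0 ≤ a i * X (i, false) ω := mul_nonneg (ha i).le (hω i).1.le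
    rcases le_or_gt (X (i, true) ω) (p i) with h | h
    · simp only [Y, if_pos h, mul_one]; exact h1
    · simp only [Y, if_neg (not_le.2 h), mul_zero]; exact le_rfl
  constructor
  · -- a.s. convergence → summable
    intro hconv
    by_contra hns
    -- setup Z and F
    set Z : ℕ → Ω → ℝ := fun i ω => Real.exp (-(Y i ω)) with hZdef
    have hZmeas : ∀ i, Measurable (Z i) := fun i => Real.measurable_exp.comp (hYmeas i).neg
    have hZpos : ∀ i ω, 0 < Z i ω := fun i ω => Real.exp_pos _
    have hY0 : ∀ᵐ ω ∂ℙ, ∀ i, 0 ≤ Y i ω := by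
      filter_upwards [hV01] with ω hω i
      exact hYnn ω hω i
    have hZle1 : ∀ᵐ ω ∂ℙ, ∀ i, Z i ω ≤ 1 := by
      filter_upwards [hY0] with ω hω i
      rw [hZdef]
      simpa using Real.exp_le_exp.2 (by linarith [hω i] : -(Y i ω) ≤ 0)
    set F : ℕ → Ω → ℝ := fun n ω => ∏ i ∈ Finset.range n, Z i ω with hFdef
    have hFexp : ∀ n ω, F n ω = Real.exp (-(∑ i ∈ Finset.range n, Y i ω)) := by
      intro n ω
      rw [← Finset.sum_neg_distrib, Real.exp_sum]
    have hFmeas : ∀ n, Measurable (F n) :=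
      fun n => Finset.measurable_prod _ fun i _ => hZmeas i
    have hZint : ∀ i, Integrable (Z i) ℙ := by
      intro i
      refine ⟨(hZmeas i).aestronglyMeasurable, HasFiniteIntegral.of_bounded (C := 1) ?_⟩
      filter_upwards [hZle1] with ω hω
      rw [Real.norm_eq_abs, abs_of_pos (hZpos i ω)]
      exact hω i
    have hFint : ∀ n, Integrable (F n) ℙ := by
      intro n
      refine ⟨(hFmeas n).aestronglyMeasurable, HasFiniteIntegral.of_bounded (C := 1) ?_⟩
      filter_upwards [hZle1] with ω hω
      rw [Real.norm_eq_abs, abs_of_nonneg (Finset.prod_nonneg fun i _ => (hZpos i ω).le)]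
      exact Finset.prod_le_one (fun i _ => (hZpos i ω).le) (fun i _ => hω i)
    -- independence: F n and Z n
    have hkey : ∀ n, IndepFun (F n) (Z n) ℙ := by
      intro n
      set S : Finset (ℕ × Bool) := Finset.range n ×ˢ Finset.univ with hSdef
      set T : Finset (ℕ × Bool) := {n} ×ˢ Finset.univ with hTdef
      have hST : Disjoint S T := by
        rw [Finset.disjoint_left]
        rintro ⟨i, b⟩ hiS hiT
        rw [hSdef, Finset.mem_product, Finset.mem_range] at hiS
        rw [hTdef, Finset.mem_product, Finset.mem_singleton] at hiT
        exact absurd (hiT.1 ▸ hiS.1) (lt_irrefl n)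
      have hIF := hindep.indepFun_finset S T hST hmeas
      set φ : ({x // x ∈ S} → ℝ) → ℝ := fun x => ∏ i ∈ (Finset.range n).attach,
        Real.exp (-(a i.1 * x ⟨(i.1, false), Finset.mem_product.2 ⟨i.2, Finset.mem_univ _⟩⟩ *
          (if x ⟨(i.1, true), Finset.mem_product.2 ⟨i.2, Finset.mem_univ _⟩⟩ ≤ p i.1
            then (1 : ℝ) else 0))) with hφdef
      set ψ : ({x // x ∈ T} → ℝ) → ℝ := fun x =>
        Real.exp (-(a n * x ⟨(n, false),
            Finset.mem_product.2 ⟨Finset.mem_singleton_self n, Finset.mem_univ _⟩⟩ *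
          (if x ⟨(n, true),
              Finset.mem_product.2 ⟨Finset.mem_singleton_self n, Finset.mem_univ _⟩⟩ ≤ p n
            then (1 : ℝ) else 0))) with hψdef
      have hφ : Measurable φ := by
        apply Finset.measurable_prod
        intro i _
        exact Real.measurable_exp.comp
          (((measurable_const.mul (measurable_pi_apply _)).mul
            (Measurable.ite (measurableSet_le (measurable_pi_apply _) measurable_const)
              measurable_const measurable_const)).neg)
      have hψ : Measurable ψ :=
        Real.measurable_exp.comp
          (((measurable_const.mul (measurable_pi_apply _)).mul
            (Measurable.ite (measurableSet_le (measurable_pi_apply _) measurable_const)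
              measurable_const measurable_const)).neg)
      have h := hIF.comp hφ hψ
      have e1 : (φ ∘ fun ω (i : {x // x ∈ S}) => X i.1 ω) = F n := by
        funext ω
        show ∏ i ∈ (Finset.range n).attach,
          Real.exp (-(a i.1 * X (i.1, false) ω *
            (if X (i.1, true) ω ≤ p i.1 then (1 : ℝ) else 0))) = F n ω
        rw [hFdef]
        exact Finset.prod_attach (Finset.range n) (fun i => Z i ω)
      have e2 : (ψ ∘ fun ω (i : {x // x ∈ T}) => X i.1 ω) = Z n := by
        funext ω
        rfl
      rwa [e1, e2] at h
    -- product formula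
    have hprod : ∀ n, ∫ ω, F n ω ∂ℙ = ∏ i ∈ Finset.range n, ∫ ω, Z i ω ∂ℙ := by
      intro n
      induction n with
      | zero => simp [hFdef]
      | succ n ih =>
        have hmul := (hkey n).integral_mul_eq_mul_integral (hFint n).1 (hZint n).1
        have : F (n + 1) = F n * Z n := by
          funext ω
          simp only [hFdef, Pi.mul_apply, Finset.prod_range_succ]
        rw [this, hmul, ih, Finset.prod_range_succ]
    -- bounds on ∫ Z i
    set c : ℝ := Real.exp (-C) / 4 with hcdef
    have hcpos : 0 < c := by positivity
    have hZbound : ∀ i, ∫ ω, Z i ω ∂ℙ ≤ 1 - c * r i := by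
      intro i
      set E : Set Ω := X (i, true) ⁻¹' Set.Iic (p i) ∩ X (i, false) ⁻¹' Set.Ici (1 / 2)
        with hEdef
      have hEmeas : MeasurableSet E :=
        ((hmeas (i, true)) measurableSet_Iic).inter ((hmeas (i, false)) measurableSet_Ici)
      have hne : ((i, true) : ℕ × Bool) ≠ (i, false) := by simp
      have hPE : ℙ E = ENNReal.ofReal (p i) * ENNReal.ofReal (1 / 2) := by
        have := (indepFun_iff_measure_inter_preimage_eq_mul.mp (hindep.indepFun hne))
          (Set.Iic (p i)) (Set.Ici (1 / 2)) measurableSet_Iic measurableSet_Ici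
        rw [hEdef, this, hPU i, hPV i]
      have hPEtoReal : (ℙ E).toReal = p i * (1 / 2) := by
        rw [hPE, ENNReal.toReal_mul, ENNReal.toReal_ofReal (hp0 i).le,
          ENNReal.toReal_ofReal (by norm_num : (0:ℝ) ≤ 1 / 2)]
      have hptw : ∀ᵐ ω ∂ℙ, Z i ω ≤
          1 - (1 - Real.exp (-(a i / 2))) * Set.indicator E (fun _ => (1 : ℝ)) ω := by
        filter_upwards [hV01] with ω hω
        by_cases hmem : ω ∈ E
        · rw [Set.indicator_of_mem hmem, mul_one]
          have h1 : X (i, true) ω ≤ p i := hmem.1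
          have h2 : (1 / 2 : ℝ) ≤ X (i, false) ω := hmem.2
          have : Z i ω = Real.exp (-(a i * X (i, false) ω)) := by
            simp only [hZdef, Y, if_pos h1, mul_one]
          rw [this]
          have : a i / 2 ≤ a i * X (i, false) ω := by
            have := (ha i).le
            nlinarith
          have := Real.exp_le_exp.2 (neg_le_neg this)
          linarith
        · rw [Set.indicator_of_notMem hmem, mul_zero, sub_zero]
          have h0 : 0 ≤ Y i ω := hYnn ω hω i
          simpa [hZdef] using Real.exp_le_exp.2 (by linarith : -(Y i ω) ≤ 0)
      have hint2 : Integrable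
          (fun ω => 1 - (1 - Real.exp (-(a i / 2))) * Set.indicator E (fun _ => (1 : ℝ)) ω)
          ℙ := by
        apply (integrable_const (1 : ℝ)).sub
        exact ((integrable_const (1 : ℝ)).indicator hEmeas).const_mul _
      have hle := integral_mono_ae (hZint i) hint2 hptw
      have hcalc : ∫ ω, (1 - (1 - Real.exp (-(a i / 2))) *
          Set.indicator E (fun _ => (1 : ℝ)) ω) ∂ℙ
          = 1 - (1 - Real.exp (-(a i / 2))) * (p i * (1 / 2)) := by
        rw [integral_sub (integrable_const 1)
          (((integrable_const (1 : ℝ)).indicator hEmeas).const_mul _),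
          integral_const, integral_const_mul, integral_indicator_const _ hEmeas,
          measureReal_def ℙ E, hPEtoReal]
        simp
      rw [hcalc] at hle
      refine hle.trans ?_
      have hx : a i / 2 * Real.exp (-(a i / 2)) ≤ 1 - Real.exp (-(a i / 2)) := by
        have h1 := Real.add_one_le_exp (a i / 2)
        have h2 : (0 : ℝ) < Real.exp (-(a i / 2)) := Real.exp_pos _
        have h3 : (a i / 2 + 1) * Real.exp (-(a i / 2)) ≤
            Real.exp (a i / 2) * Real.exp (-(a i / 2)) :=
          mul_le_mul_of_nonneg_right h1 h2.le
        rw [← Real.exp_add, add_neg_cancel, Real.exp_zero] at h3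
        nlinarith
      have hexpC : Real.exp (-C) ≤ Real.exp (-(a i / 2)) :=
        Real.exp_le_exp.2 (by linarith [hC i, (ha i).le, hCpos])
      have hgoal : c * r i ≤ (1 - Real.exp (-(a i / 2))) * (p i * (1 / 2)) := by
        have h4 : a i / 2 * Real.exp (-C) ≤ 1 - Real.exp (-(a i / 2)) := by
          have : a i / 2 * Real.exp (-C) ≤ a i / 2 * Real.exp (-(a i / 2)) :=
            mul_le_mul_of_nonneg_left hexpC (by linarith [(ha i).le])
          linarith
        have h5 : 0 ≤ p i * (1 / 2) := mul_nonneg (hp0 i).le (by norm_num)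
        have h6 : (a i / 2 * Real.exp (-C)) * (p i * (1 / 2)) ≤
            (1 - Real.exp (-(a i / 2))) * (p i * (1 / 2)) :=
          mul_le_mul_of_nonneg_right h4 h5
        calc c * r i = (a i / 2 * Real.exp (-C)) * (p i * (1 / 2)) := by
              rw [hr i, hcdef]; ring
          _ ≤ _ := h6
      linarith
    have hZnn : ∀ i, 0 ≤ ∫ ω, Z i ω ∂ℙ :=
      fun i => integral_nonneg fun ω => (hZpos i ω).le
    have hFle : ∀ n, ∫ ω, F n ω ∂ℙ ≤ Real.exp (-(c * ∑ i ∈ Finset.range n, r i)) := by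
      intro n
      rw [hprod n]
      calc ∏ i ∈ Finset.range n, ∫ ω, Z i ω ∂ℙ
          ≤ ∏ i ∈ Finset.range n, Real.exp (-(c * r i)) := by
            apply Finset.prod_le_prod (fun i _ => hZnn i)
            intro i _
            refine (hZbound i).trans ?_
            have := Real.add_one_le_exp (-(c * r i))
            linarith
        _ = Real.exp (-(c * ∑ i ∈ Finset.range n, r i)) := by
            rw [← Real.exp_sum]
            congr 1
            rw [Finset.sum_neg_distrib, Finset.mul_sum]
      
    have hF0 : ∀ n, 0 ≤ ∫ ω, F n ω ∂ℙ := by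
      intro n
      rw [hprod n]
      exact Finset.prod_nonneg fun i _ => hZnn i
    have hsums : Tendsto (fun n => ∑ i ∈ Finset.range n, r i) atTop atTop :=
      (not_summable_iff_tendsto_nat_atTop_of_nonneg hr0).1 hns
    have htends : Tendsto (fun n => Real.exp (-(c * ∑ i ∈ Finset.range n, r i)))
        atTop (nhds 0) :=
      Real.tendsto_exp_atBot.comp
        (tendsto_neg_atTop_atBot.comp (hsums.const_mul_atTop hcpos))
    have hIF0 : Tendsto (fun n => ∫ ω, F n ω ∂ℙ) atTop (nhds 0) :=
      squeeze_zero hF0 hFle htends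
    -- dominated convergence
    set g : Ω → ℝ := fun ω => Real.exp (-((G ω).toReal)) with hgdef
    have hgmeas : Measurable g :=
      Real.measurable_exp.comp (hGmeas.ennreal_toReal).neg
    have hae : ∀ᵐ ω ∂ℙ, Tendsto (fun n => F n ω) atTop (nhds (g ω)) := by
      filter_upwards [hconv, hY0] with ω hL h0
      obtain ⟨L, hL⟩ := hL
      have hmono : Monotone (fun n => ∑ i ∈ Finset.range n, Y i ω) := by
        apply monotone_nat_of_le_succ
        intro n
        rw [Finset.sum_range_succ]
        linarith [h0 n]
      have hbd : ∀ n, ∑ i ∈ Finset.range n, Y i ω ≤ L := hmono.ge_of_tendsto hL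
      have hsumm : Summable (fun i => Y i ω) := summable_of_sum_range_le h0 hbd
      have htsum := hsumm.hasSum.tendsto_sum_nat
      have hLt : ∑' i, Y i ω = L := tendsto_nhds_unique htsum hL
      have hGω : G ω = ENNReal.ofReal L := by
        have h := ENNReal.ofReal_tsum_of_nonneg h0 hsumm
        rw [hLt] at h
        exact h.symm
      have hL0 : 0 ≤ L := hLt ▸ tsum_nonneg h0
      have hgω : g ω = Real.exp (-L) := by
        show Real.exp (-((G ω).toReal)) = Real.exp (-L)
        rw [hGω, ENNReal.toReal_ofReal hL0]
      rw [hgω]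
      have : Tendsto (fun n => -(∑ i ∈ Finset.range n, Y i ω)) atTop (nhds (-L)) := hL.neg
      have := (Real.continuous_exp.tendsto _).comp this
      convert this using 2 with n
      exact hFexp n _
    have hbound : ∀ n, ∀ᵐ ω ∂ℙ, ‖F n ω‖ ≤ 1 := by
      intro n
      filter_upwards [hZle1] with ω hω
      rw [Real.norm_eq_abs, abs_of_nonneg (Finset.prod_nonneg fun i _ => (hZpos i ω).le)]
      exact Finset.prod_le_one (fun i _ => (hZpos i ω).le) (fun i _ => hω i)
    have hdct := tendsto_integral_of_dominated_convergence (fun _ => (1 : ℝ))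
      (fun n => (hFmeas n).aestronglyMeasurable) (integrable_const 1) hbound hae
    have hg0 : ∫ ω, g ω ∂ℙ = 0 := tendsto_nhds_unique hdct hIF0
    have hgint : Integrable g ℙ := by
      refine ⟨hgmeas.aestronglyMeasurable, HasFiniteIntegral.of_bounded (C := 1) ?_⟩
      filter_upwards with ω
      rw [Real.norm_eq_abs, abs_of_pos (Real.exp_pos _)]
      calc Real.exp (-((G ω).toReal)) ≤ Real.exp 0 :=
            Real.exp_le_exp.2 (neg_nonpos.2 ENNReal.toReal_nonneg)
        _ = 1 := Real.exp_zero
    have := (integral_eq_zero_iff_of_nonneg (fun ω => (Real.exp_pos _).le) hgint).mp hg0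
    obtain ⟨ω, hω⟩ := this.exists
    exact absurd hω (Real.exp_pos _).ne'
  · -- summable → a.s. convergence
    intro hsum
    have hlint : ∀ i, ∫⁻ ω, ENNReal.ofReal (Y i ω) ∂ℙ ≤ ENNReal.ofReal (a i * p i) := by
      intro i
      set B : Ω → ENNReal := fun ω =>
        ENNReal.ofReal (a i) *
          Set.indicator (X (i, true) ⁻¹' Set.Iic (p i)) (1 : Ω → ENNReal) ω with hBdef
      have hBmeas : MeasurableSet (X (i, true) ⁻¹' Set.Iic (p i)) :=
        (hmeas (i, true)) measurableSet_Iic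
      have hmono : ∀ᵐ ω ∂ℙ, ENNReal.ofReal (Y i ω) ≤ B ω := by
        filter_upwards [hV01] with ω hω
        rcases le_or_gt (X (i, true) ω) (p i) with h | h
        · have hmem : ω ∈ X (i, true) ⁻¹' Set.Iic (p i) := h
          rw [hBdef]
          simp only [Set.indicator_of_mem hmem, Pi.one_apply, mul_one]
          apply ENNReal.ofReal_le_ofReal
          simp only [Y, if_pos h, mul_one]
          nlinarith [(hω i).1, (hω i).2, (ha i).le]
        · have hnmem : ω ∉ X (i, true) ⁻¹' Set.Iic (p i) := not_le.2 h
          rw [hBdef]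
          simp only [Set.indicator_of_notMem hnmem, mul_zero, Y, if_neg (not_le.2 h),
            ENNReal.ofReal_zero, le_refl]
      calc ∫⁻ ω, ENNReal.ofReal (Y i ω) ∂ℙ ≤ ∫⁻ ω, B ω ∂ℙ := lintegral_mono_ae hmono
        _ = ENNReal.ofReal (a i) * ℙ (X (i, true) ⁻¹' Set.Iic (p i)) := by
            rw [hBdef, lintegral_const_mul _ (measurable_one.indicator hBmeas),
              lintegral_indicator_one hBmeas]
        _ = ENNReal.ofReal (a i * p i) := by
            rw [hPU i, ENNReal.ofReal_mul (ha i).le]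
    have hsum' : Summable (fun i => a i * p i) := by
      apply hsum.congr
      intro i
      rw [← hr i, hrdef]
    have hGint : ∫⁻ ω, G ω ∂ℙ < ⊤ := by
      rw [hGdef]
      calc ∫⁻ ω, ∑' i, ENNReal.ofReal (Y i ω) ∂ℙ
          = ∑' i, ∫⁻ ω, ENNReal.ofReal (Y i ω) ∂ℙ :=
            lintegral_tsum fun i => ((hYmeas i).ennreal_ofReal).aemeasurable
        _ ≤ ∑' i, ENNReal.ofReal (a i * p i) := ENNReal.tsum_le_tsum hlint
        _ = ENNReal.ofReal (∑' i, a i * p i) :=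
            (ENNReal.ofReal_tsum_of_nonneg
              (fun i => mul_nonneg (ha i).le (hp0 i).le) hsum').symm
        _ < ⊤ := ENNReal.ofReal_lt_top
    have hGfin : ∀ᵐ ω ∂ℙ, G ω < ⊤ := ae_lt_top hGmeas hGint.ne
    filter_upwards [hGfin, hV01] with ω hG hωV
    have h0 : ∀ i, 0 ≤ Y i ω := hYnn ω hωV
    have hbd : ∀ n, ∑ i ∈ Finset.range n, Y i ω ≤ (G ω).toReal := by
      intro n
      have h1 : ∑ i ∈ Finset.range n, ENNReal.ofReal (Y i ω) ≤ G ω :=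
        ENNReal.sum_le_tsum _
      have h2 := ENNReal.toReal_mono hG.ne h1
      rwa [← ENNReal.ofReal_sum_of_nonneg (fun i _ => h0 i),
        ENNReal.toReal_ofReal (Finset.sum_nonneg fun i _ => h0 i)] at h2
    have hsumm : Summable (fun i => Y i ω) := summable_of_sum_range_le h0 hbd
    exact ⟨∑' i, Y i ω, hsumm.hasSum.tendsto_sum_nat⟩
end

section
/- Let (T_n) be an increasing sequence of nonempty compact subsets of a complete metric space E such that ∑_{i≥1} d_H(T_{2^{i+1}}, T_{2^i}) < ∞, where d_H is the Hausdorff distance. Then the closure of ∪_n T_n is compact. -/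
open Metric Finset

/-- If `(T n)` is an increasing sequence of nonempty compact subsets of a complete metric
space with `∑_i d_H(T (2^(i+1)), T (2^i)) < ∞`, then the closure of `⋃ n, T n` is compact. -/
theorem stmt_15 {E : Type*} [MetricSpace E] [CompleteSpace E]
    (T : ℕ → Set E) (hne : ∀ n, (T n).Nonempty) (hcpt : ∀ n, IsCompact (T n))
    (hmono : Monotone T)
    (hsum : Summable (fun i => Metric.hausdorffDist (T (2 ^ (i + 1))) (T (2 ^ i)))) :
    IsCompact (closure (⋃ n, T n)) := by
  set f : ℕ → ℝ := fun i => Metric.hausdorffDist (T (2 ^ (i + 1))) (T (2 ^ i)) with hf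
  have hfin : ∀ m n : ℕ, EMetric.hausdorffEdist (T m) (T n) ≠ ⊤ := fun m n =>
    hausdorffEdist_ne_top_of_nonempty_of_bounded (hne m) (hne n)
      (hcpt m).isBounded (hcpt n).isBounded
  -- telescoping bound
  have key : ∀ N m : ℕ, N ≤ m →
      hausdorffDist (T (2 ^ m)) (T (2 ^ N)) ≤ ∑ i ∈ Finset.Ico N m, f i := by
    intro N m hNm
    induction m with
    | zero =>
      simp [Nat.le_zero.mp hNm, hausdorffDist_self_zero]
    | succ m ih =>
      rcases Nat.lt_or_ge N (m + 1) with h | h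
      · have hNm' : N ≤ m := Nat.lt_succ_iff.mp h
        calc hausdorffDist (T (2 ^ (m + 1))) (T (2 ^ N))
            ≤ hausdorffDist (T (2 ^ (m + 1))) (T (2 ^ m)) +
              hausdorffDist (T (2 ^ m)) (T (2 ^ N)) :=
              hausdorffDist_triangle (hfin _ _)
          _ ≤ f m + ∑ i ∈ Finset.Ico N m, f i := by
              exact add_le_add le_rfl (ih hNm')
          _ = ∑ i ∈ Finset.Ico N (m + 1), f i := by
              rw [Finset.sum_Ico_succ_top hNm']; ring
      · have : N = m + 1 := le_antisymm hNm h
        simp [this, hausdorffDist_self_zero]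
  have hfnn : ∀ i, 0 ≤ f i := fun i => hausdorffDist_nonneg
  -- total boundedness of the union
  have htb : TotallyBounded (⋃ n, T n) := by
    rw [Metric.totallyBounded_iff]
    intro ε hε
    -- find N with tail sum < ε/2
    have htail := tendsto_sum_nat_add f
    have : ∀ᶠ N in Filter.atTop, (∑' i, f (i + N)) < ε / 2 :=
      htail.eventually (gt_mem_nhds (by linarith))
    obtain ⟨N, hN⟩ := this.exists
    -- every T n is within ε/2 of T (2^N)
    have hsub : (⋃ n, T n) ⊆ Metric.thickening (ε / 2) (T (2 ^ N)) := by
      rintro x hx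
      obtain ⟨n, hn⟩ := Set.mem_iUnion.mp hx
      obtain ⟨m, hm1, hm2⟩ : ∃ m, N ≤ m ∧ n ≤ 2 ^ m :=
        ⟨max N n, le_max_left _ _, (le_max_right N n).trans (Nat.le_of_lt Nat.lt_two_pow_self)⟩
      have hx' : x ∈ T (2 ^ m) := hmono hm2 hn
      have hlt : hausdorffDist (T (2 ^ m)) (T (2 ^ N)) < ε / 2 := by
        refine lt_of_le_of_lt (key N m hm1) (lt_of_le_of_lt ?_ hN)
        have hsum' : Summable fun i => f (i + N) := (summable_nat_add_iff N).mpr hsum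
        calc (∑ i ∈ Finset.Ico N m, f i) = ∑ i ∈ Finset.range (m - N), f (i + N) := by
              rw [Finset.sum_Ico_eq_sum_range]
              exact Finset.sum_congr rfl fun i _ => by rw [add_comm]
          _ ≤ ∑' i, f (i + N) :=
              Summable.sum_le_tsum _ (fun i _ => hfnn _) hsum'
      obtain ⟨y, hy, hdy⟩ := exists_dist_lt_of_hausdorffDist_lt hx' hlt (hfin _ _)
      exact Metric.mem_thickening_iff.mpr ⟨y, hy, hdy⟩
    -- cover T (2^N) by finitely many ε/2 balls
    obtain ⟨t, htfin, hcov⟩ := (Metric.totallyBounded_iff.mp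
      (hcpt (2 ^ N)).totallyBounded) (ε / 2) (by linarith)
    refine ⟨t, htfin, fun x hx => ?_⟩
    obtain ⟨y, hy, hdy⟩ := Metric.mem_thickening_iff.mp (hsub hx)
    obtain ⟨c, hc, hyc⟩ := Set.mem_iUnion₂.mp (hcov hy)
    refine Set.mem_iUnion₂.mpr ⟨c, hc, ?_⟩
    rw [Metric.mem_ball] at *
    calc dist x c ≤ dist x y + dist y c := dist_triangle _ _ _
      _ < ε / 2 + ε / 2 := add_lt_add hdy hyc
      _ = ε := by ring
  exact TotallyBounded.isCompact_of_isClosed htb.closure isClosed_closure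
end

section
/- Let (X, d) be a metric space, μ a finite nonzero Borel measure on X, and γ > 0 such that ∫∫ d(x,y)^{-γ} dμ(x) dμ(y) < ∞. Then the Hausdorff dimension of X is at least γ (Frostman energy criterion). -/
open MeasureTheory
open scoped ENNReal NNReal

/-- The main argument, assuming second countability (needed for joint measurability of
`edist`): finiteness of the `γ`-energy forces `μH[γ] univ ≠ 0`. -/
lemma aux_frostman_energy {X : Type*} [MetricSpace X] [SecondCountableTopology X]
    [MeasurableSpace X] [BorelSpace X]
    (μ : Measure X) [IsFiniteMeasure μ] (hμ : μ ≠ 0)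
    (γ : ℝ) (hγ : 0 < γ)
    (henergy : ∫⁻ p : X × X, (edist p.1 p.2) ^ (-γ) ∂(μ.prod μ) < ⊤) :
    μH[γ] (Set.univ : Set X) ≠ 0 := by
  classical
  set f : X → ℝ≥0∞ := fun x => ∫⁻ y, (edist x y) ^ (-γ) ∂μ with hf_def
  have hmeas : Measurable fun p : X × X => (edist p.1 p.2) ^ (-γ) :=
    ENNReal.continuous_rpow_const.measurable.comp measurable_edist
  have hfm : Measurable f := hmeas.lintegral_prod_right'
  have henergy' : ∫⁻ x, f x ∂μ < ⊤ := by
    rw [hf_def]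
    rwa [lintegral_prod _ hmeas.aemeasurable] at henergy
  have hae : ∀ᵐ x ∂μ, f x < ⊤ := ae_lt_top hfm henergy'.ne
  -- find a level n with positive measure
  have h1 : ∃ n : ℕ, μ {x | f x ≤ n} ≠ 0 := by
    by_contra h
    push_neg at h
    have hU : μ (⋃ n : ℕ, {x | f x ≤ n}) = 0 := measure_iUnion_null h
    have hsub : {x | f x < ⊤} ⊆ ⋃ n : ℕ, {x | f x ≤ n} := by
      intro x hx
      obtain ⟨n, hn⟩ := ENNReal.exists_nat_gt (lt_top_iff_ne_top.mp hx)
      exact Set.mem_iUnion.mpr ⟨n, hn.le⟩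
    have h2 : μ {x | f x < ⊤} = 0 := measure_mono_null hsub hU
    have h4 : μ {x | ¬ f x < ⊤} = 0 := ae_iff.mp hae
    have h3 : μ Set.univ = 0 := by
      have hle : μ Set.univ ≤ μ {x | f x < ⊤} + μ {x | ¬ f x < ⊤} := by
        refine le_trans (measure_mono ?_) (measure_union_le _ _)
        intro x _
        by_cases hx : f x < ⊤
        · exact Or.inl hx
        · exact Or.inr hx
      rw [h2, h4, add_zero] at hle
      exact le_antisymm hle zero_le
    exact hμ (Measure.measure_univ_eq_zero.mp h3)
  obtain ⟨n, hn⟩ := h1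
  set A : Set X := {x | f x ≤ n} with hA_def
  have hA_meas : MeasurableSet A := hfm measurableSet_Iic
  set M : ℝ≥0∞ := (n : ℝ≥0∞) + 1 with hM_def
  have hM0 : M ≠ 0 := by simp [hM_def]
  have hMtop : M ≠ ⊤ := by simp [hM_def]
  -- key estimate: for x ∈ A, μ of the closed ball of radius b around x is ≤ M * b ^ γ
  have key : ∀ x ∈ A, ∀ b : ℝ≥0∞, μ (EMetric.closedBall x b) ≤ M * b ^ γ := by
    intro x hx b
    have hball : MeasurableSet (EMetric.closedBall x b) :=
      measurable_edist_left measurableSet_Iic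
    have hbound : μ (EMetric.closedBall x b) * b ^ (-γ) ≤ M := by
      calc μ (EMetric.closedBall x b) * b ^ (-γ)
          = ∫⁻ _ in EMetric.closedBall x b, b ^ (-γ) ∂μ := by
            rw [setLIntegral_const]; ring
        _ ≤ ∫⁻ y in EMetric.closedBall x b, (edist x y) ^ (-γ) ∂μ := by
            refine setLIntegral_mono (ENNReal.continuous_rpow_const.measurable.comp
              measurable_edist_right) ?_
            intro y hy
            have h1 : edist x y ≤ b := by
              rw [edist_comm]; exact EMetric.mem_closedBall.mp hy
            rw [ENNReal.rpow_neg, ENNReal.rpow_neg]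
            exact ENNReal.inv_le_inv' (ENNReal.rpow_le_rpow h1 hγ.le)
        _ ≤ f x := setLIntegral_le_lintegral _ _
        _ ≤ n := hx
        _ ≤ M := by simp [hM_def]
    by_cases hb0 : b = 0
    · by_contra hcon
      have hμball : μ (EMetric.closedBall x b) ≠ 0 := by
        intro h0
        exact hcon (by simp [h0])
      have htop : μ (EMetric.closedBall x b) * b ^ (-γ) = ⊤ := by
        rw [hb0, ENNReal.zero_rpow_of_neg (neg_lt_zero.mpr hγ)]
        rw [hb0] at hμball
        exact ENNReal.mul_top hμball
      rw [htop] at hbound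
      exact hMtop (top_le_iff.mp hbound)
    by_cases hbtop : b = ⊤
    · subst hbtop
      rw [ENNReal.top_rpow_of_pos hγ, ENNReal.mul_top hM0]
      exact le_top
    · have hbγ0 : b ^ γ ≠ 0 := by
        simp [ENNReal.rpow_eq_zero_iff, hb0, hbtop, hγ, hγ.not_gt]
      have hbγtop : b ^ γ ≠ ⊤ := by
        simp [ENNReal.rpow_eq_top_iff, hb0, hbtop, hγ, hγ.not_gt]
      have hmul := mul_le_mul_left hbound (b ^ γ)
      rwa [ENNReal.rpow_neg, mul_assoc, ENNReal.inv_mul_cancel hbγ0 hbγtop,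
        mul_one] at hmul
  -- the renormalized restricted measure is a Frostman measure
  set ν : Measure X := M⁻¹ • μ.restrict A with hν_def
  have hν_le : ν ≤ μH[γ] := by
    refine Measure.le_hausdorffMeasure γ ν 1 one_pos ?_
    intro s _
    rcases Set.eq_empty_or_nonempty (s ∩ A) with he | ⟨x, hxs, hxA⟩
    · have h0 : ν s = 0 := by
        simp [hν_def, Measure.restrict_apply' hA_meas, he]
      simp [h0]
    · have hsub : s ⊆ EMetric.closedBall x (EMetric.diam s) := fun y hy =>
        EMetric.mem_closedBall.mpr (EMetric.edist_le_diam_of_mem hy hxs)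
      have h1 : μ.restrict A s ≤ M * EMetric.diam s ^ γ := by
        calc μ.restrict A s = μ (s ∩ A) := Measure.restrict_apply' hA_meas
          _ ≤ μ (EMetric.closedBall x (EMetric.diam s)) :=
              measure_mono (Set.inter_subset_left.trans hsub)
          _ ≤ M * EMetric.diam s ^ γ := key x hxA _
      calc ν s = M⁻¹ * μ.restrict A s := by simp [hν_def]
        _ ≤ M⁻¹ * (M * EMetric.diam s ^ γ) := mul_le_mul_right h1 _
        _ = (M⁻¹ * M) * EMetric.diam s ^ γ := by ring
        _ = EMetric.diam s ^ γ := by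
            rw [ENNReal.inv_mul_cancel hM0 hMtop, one_mul]
  intro h0
  have hν0 : ν Set.univ = 0 := le_antisymm (le_trans (hν_le _) h0.le) zero_le
  have hA0 : M⁻¹ * μ A = 0 := by
    simpa [hν_def, Measure.restrict_apply' hA_meas] using hν0
  rcases mul_eq_zero.mp hA0 with h | h
  · exact (ENNReal.inv_ne_zero.mpr hMtop) h
  · exact hn h

/-- Frostman's energy criterion: if `μ` is a finite nonzero Borel measure on a metric
space `X` and the `γ`-energy `∫∫ d(x,y)^(-γ) dμ dμ` is finite, then the Hausdorff
dimension of `X` is at least `γ`. -/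
theorem stmt_16 {X : Type*} [MetricSpace X] [MeasurableSpace X] [BorelSpace X]
    (μ : Measure X) [IsFiniteMeasure μ] (hμ : μ ≠ 0)
    (γ : ℝ) (hγ : 0 < γ)
    (henergy : ∫⁻ p : X × X, (edist p.1 p.2) ^ (-γ) ∂(μ.prod μ) < ⊤) :
    ENNReal.ofReal γ ≤ dimH (Set.univ : Set X) := by
  by_contra hcon
  push_neg at hcon
  -- extract an exponent `d` strictly between `dimH univ` and `γ`
  obtain ⟨d, hd1, hd2⟩ := ENNReal.lt_iff_exists_nnreal_btwn.mp hcon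
  have hHd : μH[(d : ℝ)] (Set.univ : Set X) = 0 :=
    hausdorffMeasure_of_dimH_lt hd1
  -- finiteness of a Hausdorff measure yields second countability
  have hX : Nonempty X := by
    obtain ⟨x, -⟩ := nonempty_of_measure_ne_zero
      ((Measure.measure_univ_ne_zero).mpr hμ)
    exact ⟨x⟩
  haveI : SecondCountableTopology X := by
    refine EMetric.secondCountable_of_almost_dense_set fun ε hε => ?_
    have hlt : μH[(d : ℝ)] (Set.univ : Set X) < ⊤ := by
      rw [hHd]; exact ENNReal.zero_lt_top
    rw [Measure.hausdorffMeasure_apply] at hlt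
    have hlt' : (⨅ (t : ℕ → Set X) (_ : Set.univ ⊆ ⋃ n, t n)
        (_ : ∀ n, EMetric.diam (t n) ≤ ε),
        ∑' n, ⨆ _ : (t n).Nonempty, EMetric.diam (t n) ^ (d : ℝ)) < ⊤ :=
      lt_of_le_of_lt (le_iSup₂ (f := fun (r : ℝ≥0∞) (_ : 0 < r) =>
        ⨅ (t : ℕ → Set X) (_ : Set.univ ⊆ ⋃ n, t n)
          (_ : ∀ n, EMetric.diam (t n) ≤ r),
          ∑' n, ⨆ _ : (t n).Nonempty, EMetric.diam (t n) ^ (d : ℝ)) ε hε) hlt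
    obtain ⟨t, ht⟩ := iInf_lt_iff.mp hlt'
    obtain ⟨hcov, ht2⟩ := iInf_lt_iff.mp ht
    obtain ⟨hdiam, -⟩ := iInf_lt_iff.mp ht2
    -- choose a point in each nonempty `t n`
    classical
    set pt : ℕ → X := fun n => if h : (t n).Nonempty then h.choose else Classical.arbitrary X
      with hpt_def
    refine ⟨Set.range pt, Set.countable_range pt, ?_⟩
    refine Set.eq_univ_of_forall fun y => ?_
    obtain ⟨n, hyn⟩ := Set.mem_iUnion.mp (hcov (Set.mem_univ y))
    have hne : (t n).Nonempty := ⟨y, hyn⟩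
    refine Set.mem_biUnion ⟨n, rfl⟩ ?_
    have hptn : pt n ∈ t n := by
      rw [hpt_def]; simp only [hne, dif_pos]; exact hne.choose_spec
    calc edist y (pt n) ≤ EMetric.diam (t n) := EMetric.edist_le_diam_of_mem hyn hptn
      _ ≤ ε := hdiam n
  -- now apply the main argument
  have hne0 : μH[γ] (Set.univ : Set X) ≠ 0 := aux_frostman_energy μ hμ γ hγ henergy
  have hfinal : (γ.toNNReal : ℝ≥0∞) ≤ dimH (Set.univ : Set X) := by
    refine le_dimH_of_hausdorffMeasure_ne_zero (d := γ.toNNReal) ?_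
    rwa [Real.coe_toNNReal γ hγ.le]
  have : ENNReal.ofReal γ ≤ dimH (Set.univ : Set X) := hfinal
  exact absurd this (not_le.mpr hcon)
end

section
/- Let (a_i) be positive reals with partial sums A_i, and suppose for every ε > 0 eventually a_i ≥ i^{-α-ε} among 'good' indices and a_i + a_{i+1} + ... + a_{2i} = i^{1-α+o(1)} for α > 1. Define G_n = {i ∈ [n,2n] : a_i ≥ i^{-α-ε}} for fixed ε > 0 and ℓ_n = ∑_{i∈G_n} a_i. Then #G_n = n^{1+o(1)} and ℓ_n = n^{1-α+o(1)}. -/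
open Finset Filter Real

/-- Under `(D_α)` with `α > 1`, the set `G n` of good indices `i ∈ [n, 2n]`
(those with `a i ≥ i^(-α-ε)`) has cardinality `n^(1+o(1))` and its total length
`ℓ n = ∑_{i ∈ G n} a i` satisfies `ℓ n = n^(1-α+o(1))`. -/
theorem stmt_18 (α : ℝ) (hα : 1 < α) (ε : ℝ) (hε : 0 < ε)
    (a : ℕ → ℝ) (ha : ∀ i, 0 < a i)
    (hupper : ∀ δ > (0 : ℝ), ∃ N : ℕ, ∀ i ≥ N, a i ≤ (i : ℝ) ^ (-α + δ))
    (hblock : ∀ δ > (0 : ℝ), ∃ N : ℕ, ∀ i ≥ N,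
      (i : ℝ) ^ (1 - α - δ) ≤ (∑ j ∈ Finset.Icc i (2 * i), a j) ∧
      (∑ j ∈ Finset.Icc i (2 * i), a j) ≤ (i : ℝ) ^ (1 - α + δ))
    (G : ℕ → Finset ℕ)
    (hG : ∀ n, G n = (Finset.Icc n (2 * n)).filter (fun i : ℕ => (i : ℝ) ^ (-α - ε) ≤ a i))
    (ℓ : ℕ → ℝ) (hℓ : ∀ n, ℓ n = ∑ i ∈ G n, a i) :
    ∀ δ > (0 : ℝ), ∃ N : ℕ, ∀ n ≥ N,
      (n : ℝ) ^ (1 - δ) ≤ (G n).card ∧ ((G n).card : ℝ) ≤ (n : ℝ) ^ (1 + δ) ∧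
      (n : ℝ) ^ (1 - α - δ) ≤ ℓ n ∧ ℓ n ≤ (n : ℝ) ^ (1 - α + δ) := by
  intro δ hδ
  set η : ℝ := min (min ε δ) 1 / 4 with hη_def
  have hη : 0 < η := by
    have : 0 < min (min ε δ) 1 := lt_min (lt_min hε hδ) one_pos
    positivity
  have hηε : η ≤ ε / 4 := by
    have : min (min ε δ) 1 ≤ ε := (min_le_left _ _).trans (min_le_left _ _)
    simp only [hη_def]; linarith
  have hηδ : η ≤ δ / 4 := by
    have : min (min ε δ) 1 ≤ δ := (min_le_left _ _).trans (min_le_right _ _)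
    simp only [hη_def]; linarith
  have hη1 : η ≤ 1 / 4 := by
    have : min (min ε δ) 1 ≤ 1 := min_le_right _ _
    simp only [hη_def]; linarith
  obtain ⟨N₁, hN₁⟩ := hblock η hη
  obtain ⟨N₂, hN₂⟩ := hupper η hη
  -- eventual numeric conditions on n
  have h1 : ∀ᶠ n : ℕ in atTop, ((n : ℝ)) ^ (η - ε) ≤ 1 / 4 := by
    have ht : Tendsto (fun x : ℝ => x ^ (-(ε - η))) atTop (nhds 0) :=
      tendsto_rpow_neg_atTop (by linarith)
    have := (ht.comp tendsto_natCast_atTop_atTop).eventually_le_const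
      (show (0:ℝ) < 1/4 by norm_num)
    filter_upwards [this] with n hn
    have : η - ε = -(ε - η) := by ring
    rw [this]; exact hn
  have h2 : ∀ᶠ n : ℕ in atTop, ((n : ℝ)) ^ (-η) ≤ 1 / 2 := by
    have ht : Tendsto (fun x : ℝ => x ^ (-η)) atTop (nhds 0) := tendsto_rpow_neg_atTop hη
    exact (ht.comp tendsto_natCast_atTop_atTop).eventually_le_const
      (show (0:ℝ) < 1/2 by norm_num)
  have h3 : ∀ᶠ n : ℕ in atTop, (2 : ℝ) ≤ (n : ℝ) ^ δ := by
    have ht : Tendsto (fun x : ℝ => x ^ δ) atTop atTop := tendsto_rpow_atTop hδ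
    exact (ht.comp tendsto_natCast_atTop_atTop).eventually_ge_atTop 2
  obtain ⟨N₀, hN₀⟩ := eventually_atTop.mp (h1.and (h2.and h3))
  refine ⟨max (max N₀ 1) (max N₁ N₂), fun n hn => ?_⟩
  have hn0 : n ≥ N₀ := le_trans (le_max_left _ _) (le_trans (le_max_left _ _) hn)
  have hn1 : 1 ≤ n := le_trans (le_max_right _ _) (le_trans (le_max_left _ _) hn)
  have hnN1 : n ≥ N₁ := le_trans (le_max_left _ _) (le_trans (le_max_right _ _) hn)
  have hnN2 : n ≥ N₂ := le_trans (le_max_right _ _) (le_trans (le_max_right _ _) hn)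
  obtain ⟨hq1, hq2, hq3⟩ := hN₀ n hn0
  have hnR : (1 : ℝ) ≤ (n : ℝ) := by exact_mod_cast hn1
  have hnpos : (0 : ℝ) < (n : ℝ) := by linarith
  set S : ℝ := ∑ j ∈ Finset.Icc n (2 * n), a j with hS
  obtain ⟨hSlow, hShigh⟩ := hN₁ n hnN1
  have hGsub : G n ⊆ Finset.Icc n (2 * n) := by rw [hG]; exact Finset.filter_subset _ _
  -- ℓ n ≤ S
  have hℓS : ℓ n ≤ S := by
    rw [hℓ]
    exact Finset.sum_le_sum_of_subset_of_nonneg hGsub (fun i _ _ => (ha i).le)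
  -- split sum
  have hsplit : ℓ n + (∑ i ∈ (Finset.Icc n (2 * n)).filter
      (fun i : ℕ => ¬ ((i : ℝ) ^ (-α - ε) ≤ a i)), a i) = S := by
    rw [hℓ, hG]
    exact Finset.sum_filter_add_sum_filter_not _ _ _
  -- bad sum bound
  have hbad : (∑ i ∈ (Finset.Icc n (2 * n)).filter
      (fun i : ℕ => ¬ ((i : ℝ) ^ (-α - ε) ≤ a i)), a i) ≤ 2 * (n : ℝ) ^ (1 - α - ε) := by
    have hcard : ((Finset.Icc n (2 * n)).filter
        (fun i : ℕ => ¬ ((i : ℝ) ^ (-α - ε) ≤ a i))).card ≤ n + 1 := by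
      calc _ ≤ (Finset.Icc n (2 * n)).card := Finset.card_filter_le _ _
        _ = n + 1 := by rw [Nat.card_Icc]; omega
    have hterm : ∀ i ∈ (Finset.Icc n (2 * n)).filter
        (fun i : ℕ => ¬ ((i : ℝ) ^ (-α - ε) ≤ a i)), a i ≤ (n : ℝ) ^ (-α - ε) := by
      intro i hi
      rw [Finset.mem_filter, Finset.mem_Icc] at hi
      have h1 : a i ≤ (i : ℝ) ^ (-α - ε) := (not_le.mp hi.2).le
      have h2 : (i : ℝ) ^ (-α - ε) ≤ (n : ℝ) ^ (-α - ε) :=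
        Real.rpow_le_rpow_of_nonpos hnpos (by exact_mod_cast hi.1.1) (by linarith)
      linarith
    calc (∑ i ∈ (Finset.Icc n (2 * n)).filter
        (fun i : ℕ => ¬ ((i : ℝ) ^ (-α - ε) ≤ a i)), a i)
        ≤ ((Finset.Icc n (2 * n)).filter
        (fun i : ℕ => ¬ ((i : ℝ) ^ (-α - ε) ≤ a i))).card • ((n : ℝ) ^ (-α - ε)) :=
          Finset.sum_le_card_nsmul _ _ _ hterm
      _ = (((Finset.Icc n (2 * n)).filter
        (fun i : ℕ => ¬ ((i : ℝ) ^ (-α - ε) ≤ a i))).card : ℝ) * ((n : ℝ) ^ (-α - ε)) := by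
          rw [nsmul_eq_mul]
      _ ≤ ((n : ℝ) + 1) * ((n : ℝ) ^ (-α - ε)) := by
          apply mul_le_mul_of_nonneg_right _ (Real.rpow_nonneg hnpos.le _)
          exact_mod_cast hcard
      _ ≤ (2 * (n : ℝ)) * ((n : ℝ) ^ (-α - ε)) := by
          apply mul_le_mul_of_nonneg_right _ (Real.rpow_nonneg hnpos.le _)
          linarith
      _ = 2 * (n : ℝ) ^ (1 - α - ε) := by
          rw [show (1 : ℝ) - α - ε = 1 + (-α - ε) by ring, Real.rpow_add hnpos,
            Real.rpow_one]; ring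
  -- key lower inequality: ℓ n ≥ n^(1-α-2η)
  have e1 : (n : ℝ) ^ (1 - α - 2 * η) = (n : ℝ) ^ (1 - α - η) * (n : ℝ) ^ (-η) := by
    rw [← Real.rpow_add hnpos]; ring_nf
  have e2 : (n : ℝ) ^ (1 - α - ε) = (n : ℝ) ^ (1 - α - η) * (n : ℝ) ^ (η - ε) := by
    rw [← Real.rpow_add hnpos]; ring_nf
  have hposη : (0 : ℝ) < (n : ℝ) ^ (1 - α - η) := Real.rpow_pos_of_pos hnpos _
  have hℓlow2 : (n : ℝ) ^ (1 - α - 2 * η) ≤ ℓ n := by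
    have : (n : ℝ) ^ (1 - α - 2 * η) + 2 * (n : ℝ) ^ (1 - α - ε) ≤ (n : ℝ) ^ (1 - α - η) := by
      rw [e1, e2]
      nlinarith [hposη]
    linarith [hsplit, hbad, hSlow]
  refine ⟨?_, ?_, ?_, ?_⟩
  · -- card lower bound
    have hterm : ∀ i ∈ G n, a i ≤ (n : ℝ) ^ (-α + η) := by
      intro i hi
      have hi' := hGsub hi
      rw [Finset.mem_Icc] at hi'
      have h1 : a i ≤ (i : ℝ) ^ (-α + η) := hN₂ i (le_trans hnN2 hi'.1)
      have h2 : (i : ℝ) ^ (-α + η) ≤ (n : ℝ) ^ (-α + η) :=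
        Real.rpow_le_rpow_of_nonpos hnpos (by exact_mod_cast hi'.1) (by linarith)
      linarith
    have hℓcard : ℓ n ≤ ((G n).card : ℝ) * (n : ℝ) ^ (-α + η) := by
      rw [hℓ]
      calc (∑ i ∈ G n, a i) ≤ (G n).card • ((n : ℝ) ^ (-α + η)) :=
            Finset.sum_le_card_nsmul _ _ _ hterm
        _ = ((G n).card : ℝ) * (n : ℝ) ^ (-α + η) := nsmul_eq_mul _ _
    have hb : (0 : ℝ) < (n : ℝ) ^ (-α + η) := Real.rpow_pos_of_pos hnpos _
    have : (n : ℝ) ^ (1 - 3 * η) ≤ ((G n).card : ℝ) := by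
      rw [show (1 : ℝ) - 3 * η = (1 - α - 2 * η) - (-α + η) by ring,
        Real.rpow_sub hnpos, div_le_iff₀ hb]
      calc (n : ℝ) ^ (1 - α - 2 * η) ≤ ℓ n := hℓlow2
        _ ≤ ((G n).card : ℝ) * (n : ℝ) ^ (-α + η) := hℓcard
    calc (n : ℝ) ^ (1 - δ) ≤ (n : ℝ) ^ (1 - 3 * η) :=
          Real.rpow_le_rpow_of_exponent_le hnR (by linarith)
      _ ≤ ((G n).card : ℝ) := this
  · -- card upper bound
    have hcard : (G n).card ≤ n + 1 := by
      calc (G n).card ≤ (Finset.Icc n (2 * n)).card := Finset.card_le_card hGsub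
        _ = n + 1 := by rw [Nat.card_Icc]; omega
    have : ((G n).card : ℝ) ≤ (n : ℝ) + 1 := by exact_mod_cast hcard
    calc ((G n).card : ℝ) ≤ (n : ℝ) + 1 := this
      _ ≤ 2 * (n : ℝ) := by linarith
      _ ≤ (n : ℝ) ^ δ * (n : ℝ) := mul_le_mul_of_nonneg_right hq3 hnpos.le
      _ = (n : ℝ) ^ (1 + δ) := by
          rw [show (1 : ℝ) + δ = δ + 1 by ring, Real.rpow_add hnpos, Real.rpow_one]
  · -- ℓ lower bound
    calc (n : ℝ) ^ (1 - α - δ) ≤ (n : ℝ) ^ (1 - α - 2 * η) :=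
          Real.rpow_le_rpow_of_exponent_le hnR (by linarith)
      _ ≤ ℓ n := hℓlow2
  · -- ℓ upper bound
    calc ℓ n ≤ S := hℓS
      _ ≤ (n : ℝ) ^ (1 - α + η) := hShigh
      _ ≤ (n : ℝ) ^ (1 - α + δ) := Real.rpow_le_rpow_of_exponent_le hnR (by linarith)
end
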